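/- arXiv:0910.0544 — 4 statements merged into one kernel-verified Lean document; each statement's English description precedes it below -/
import Mathlib

section
/- Let Y_1, ..., Y_n be i.i.d. random variables uniformly distributed on the interval (0, s) for some s > 0. If a = (a_1, ..., a_n) and b = (b_1, ..., b_n) are vectors of positive reals such that (log a_1, ..., log a_n) is majorized by (log b_1, ..., log b_n), then ∑_{i=1}^n a_i Y_i ≤_st ∑_{i=1}^n b_i Y_i. -/
open MeasureTheory ProbabilityTheory

/-- `a` is majorized by `b` (written `a ≺ b`). -/
def IsMajorizedBy {n : ℕ} (a b : Fin n → ℝ) : Prop :=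
  (∑ i, a i = ∑ i, b i) ∧
  ∀ k : Fin n, ∑ i ∈ Finset.Ici k, a (Tuple.sort a i) ≤ ∑ i ∈ Finset.Ici k, b (Tuple.sort b i)

open Set Finset Function
open scoped ENNReal

noncomputable def Lfun (P Q z : ℝ) : ENNReal := volume (Ioo 0 P ∩ Ioo (z - Q) z)

noncomputable def nu (s : ℝ) : Measure ℝ := (ENNReal.ofReal s)⁻¹ • volume.restrict (Ioo 0 s)


lemma Lfun_eq (P Q z : ℝ) :
    Lfun P Q z = ENNReal.ofReal (min (min P Q) (min z (P + Q - z))) := by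
  rw [Lfun, Set.Ioo_inter_Ioo, Real.volume_Ioo]
  congr 1
  simp only [min_def, max_def]
  split_ifs <;> linarith

lemma Lfun_meas (P Q : ℝ) : Measurable (Lfun P Q) := by
  have : Lfun P Q = fun z => ENNReal.ofReal (min (min P Q) (min z (P + Q - z))) :=
    funext fun z => Lfun_eq P Q z
  rw [this]
  apply ENNReal.measurable_ofReal.comp
  fun_prop

lemma L_swap (P Q : ℝ) (S : Set ℝ) (hS : MeasurableSet S) :
    ∫⁻ z in S, Lfun P Q z = ∫⁻ u in Ioo 0 P, volume (Ioo u (u + Q) ∩ S) := by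
  have hW : MeasurableSet {p : ℝ × ℝ | p.1 < p.2 ∧ p.2 < p.1 + Q} := by
    apply MeasurableSet.inter
    · exact measurableSet_lt measurable_fst measurable_snd
    · exact measurableSet_lt measurable_snd (by fun_prop)
  have h1 := Measure.prod_apply (μ := volume.restrict (Ioo 0 P)) (ν := volume.restrict S) hW
  have h2 := Measure.prod_apply_symm (μ := volume.restrict (Ioo 0 P)) (ν := volume.restrict S) hW
  rw [h2] at h1
  have e1 : ∀ u : ℝ, (Prod.mk u ⁻¹' {p : ℝ × ℝ | p.1 < p.2 ∧ p.2 < p.1 + Q}) = Ioo u (u + Q) := by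
    intro u; ext z; simp [Set.mem_Ioo]
  have e2 : ∀ z : ℝ, ((fun u => (u, z)) ⁻¹' {p : ℝ × ℝ | p.1 < p.2 ∧ p.2 < p.1 + Q})
      = Ioo (z - Q) z := by
    intro z; ext u
    simp only [Set.mem_preimage, Set.mem_setOf_eq, Set.mem_Ioo]
    constructor
    · rintro ⟨h1', h2'⟩; exact ⟨by linarith, h1'⟩
    · rintro ⟨h1', h2'⟩; exact ⟨h2', by linarith⟩
  calc ∫⁻ z in S, Lfun P Q z
      = ∫⁻ z in S, (volume.restrict (Ioo 0 P)) (Ioo (z - Q) z) := by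
        apply lintegral_congr
        intro z
        rw [Lfun, Measure.restrict_apply measurableSet_Ioo, Set.inter_comm]
    _ = ∫⁻ u in Ioo 0 P, (volume.restrict S) (Ioo u (u + Q)) := by
        simp only [e1, e2] at h1
        exact h1
    _ = ∫⁻ u in Ioo 0 P, volume (Ioo u (u + Q) ∩ S) := by
        exact lintegral_congr fun u => Measure.restrict_apply measurableSet_Ioo

lemma L_total (P Q : ℝ) (hQ : 0 ≤ Q) :
    ∫⁻ z, Lfun P Q z = ENNReal.ofReal (P * Q) := by
  rw [← setLIntegral_univ, L_swap P Q univ MeasurableSet.univ]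
  simp only [Set.inter_univ, Real.volume_Ioo, add_sub_cancel_left]
  rw [setLIntegral_const, Real.volume_Ioo, sub_zero, ← ENNReal.ofReal_mul hQ, mul_comm]

lemma vol_Ioo_inter_Iic (a b c : ℝ) :
    volume (Ioo a b ∩ Iic c) = ENNReal.ofReal (min b c - a) := by
  rcases lt_or_ge c b with h | h
  · have : Ioo a b ∩ Iic c = Ioc a c := by
      ext z
      simp only [Set.mem_inter_iff, Set.mem_Ioo, Set.mem_Iic, Set.mem_Ioc]
      constructor
      · rintro ⟨⟨h1, _⟩, h3⟩; exact ⟨h1, h3⟩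
      · rintro ⟨h1, h2⟩; exact ⟨⟨h1, lt_of_le_of_lt h2 h⟩, h2⟩
    rw [this, Real.volume_Ioc, min_eq_right (le_of_lt h)]
  · have : Ioo a b ∩ Iic c = Ioo a b :=
      Set.inter_eq_self_of_subset_left fun z hz => le_trans (le_of_lt hz.2) h
    rw [this, Real.volume_Ioo, min_eq_left h]

lemma L_slice (P Q T : ℝ) :
    ∫⁻ z in Iic T, Lfun P Q z = ∫⁻ u in Ioo 0 P, ENNReal.ofReal (min Q (T - u)) := by
  rw [L_swap P Q (Iic T) measurableSet_Iic]
  apply lintegral_congr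
  intro u
  rw [vol_Ioo_inter_Iic]
  congr 1
  rcases le_total (u + Q) T with h | h
  · rw [min_eq_left h, min_eq_left (by linarith)]; ring
  · rw [min_eq_right h, min_eq_right (by linarith)]

lemma sum_le_sum_of_prod (a₁ b₁ a₂ b₂ : ℝ) (h2 : 0 < a₂) (h21 : a₂ ≤ a₁) (h1 : a₁ ≤ b₁)
    (hb : b₁ ≤ b₂) (hprod : a₁ * b₁ = a₂ * b₂) : a₁ + b₁ ≤ a₂ + b₂ := by
  nlinarith [mul_nonneg (sub_nonneg.mpr h21) (sub_nonneg.mpr (le_trans h21 h1))]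

lemma L_crossing_le (a₁ b₁ a₂ b₂ z : ℝ) (h2 : 0 < a₂) (h21 : a₂ ≤ a₁) (h1 : a₁ ≤ b₁)
    (hb : b₁ ≤ b₂) (hz : z ≤ a₁ + b₁ - a₂) :
    Lfun a₂ b₂ z ≤ Lfun a₁ b₁ z := by
  rw [Lfun_eq, Lfun_eq]
  apply ENNReal.ofReal_le_ofReal
  apply le_min (le_min ?_ ?_) (le_min ?_ ?_)
  · exact le_trans (min_le_of_left_le (min_le_left _ _)) h21
  · exact le_trans (min_le_of_left_le (min_le_left _ _)) (le_trans h21 h1)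
  · exact min_le_of_right_le (min_le_left _ _)
  · exact le_trans (min_le_of_left_le (min_le_left _ _)) (by linarith)

lemma L_crossing_ge (a₁ b₁ a₂ b₂ z : ℝ) (h2 : 0 < a₂) (h21 : a₂ ≤ a₁) (h1 : a₁ ≤ b₁)
    (hb : b₁ ≤ b₂) (hprod : a₁ * b₁ = a₂ * b₂) (hz : a₁ + b₁ - a₂ ≤ z) :
    Lfun a₁ b₁ z ≤ Lfun a₂ b₂ z := by
  have hsum : a₁ + b₁ ≤ a₂ + b₂ := sum_le_sum_of_prod a₁ b₁ a₂ b₂ h2 h21 h1 hb hprod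
  rw [Lfun_eq, Lfun_eq]
  apply ENNReal.ofReal_le_ofReal
  apply le_min (le_min ?_ ?_) (le_min ?_ ?_)
  · exact le_trans (min_le_of_right_le (min_le_right _ _)) (by linarith)
  · exact le_trans (min_le_of_left_le (min_le_left _ _)) (le_trans h1 hb)
  · exact min_le_of_right_le (min_le_left _ _)
  · exact le_trans (min_le_of_right_le (min_le_right _ _)) (by linarith)

lemma L_compare (a₁ b₁ a₂ b₂ T : ℝ) (h2 : 0 < a₂) (h21 : a₂ ≤ a₁) (h1 : a₁ ≤ b₁)
    (hb : b₁ ≤ b₂) (hprod : a₁ * b₁ = a₂ * b₂) :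
    ∫⁻ z in Iic T, Lfun a₂ b₂ z ≤ ∫⁻ z in Iic T, Lfun a₁ b₁ z := by
  have h1pos : 0 < a₁ := lt_of_lt_of_le h2 h21
  rcases le_total T (a₁ + b₁ - a₂) with hT | hT
  · apply setLIntegral_mono (Lfun_meas a₁ b₁)
    intro z hz
    exact L_crossing_le a₁ b₁ a₂ b₂ z h2 h21 h1 hb (le_trans (Set.mem_Iic.mp hz) hT)
  · -- use total masses
    have tot1 : (∫⁻ z in Iic T, Lfun a₁ b₁ z) + (∫⁻ z in (Iic T)ᶜ, Lfun a₁ b₁ z)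
        = ENNReal.ofReal (a₁ * b₁) := by
      rw [lintegral_add_compl _ measurableSet_Iic, L_total _ _ (by linarith)]
    have tot2 : (∫⁻ z in Iic T, Lfun a₂ b₂ z) + (∫⁻ z in (Iic T)ᶜ, Lfun a₂ b₂ z)
        = ENNReal.ofReal (a₂ * b₂) := by
      rw [lintegral_add_compl _ measurableSet_Iic, L_total _ _ (by linarith [le_trans (le_trans h21 h1) hb])]
    have hmono : (∫⁻ z in (Iic T)ᶜ, Lfun a₁ b₁ z) ≤ ∫⁻ z in (Iic T)ᶜ, Lfun a₂ b₂ z := by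
      apply setLIntegral_mono (Lfun_meas a₂ b₂)
      intro z hz
      rw [Set.mem_compl_iff, Set.mem_Iic, not_le] at hz
      exact L_crossing_ge a₁ b₁ a₂ b₂ z h2 h21 h1 hb hprod (le_trans hT (le_of_lt hz))
    have hfin : (∫⁻ z in (Iic T)ᶜ, Lfun a₂ b₂ z) ≠ ⊤ := by
      intro h
      rw [h] at tot2
      simp at tot2
    have : (∫⁻ z in Iic T, Lfun a₂ b₂ z) + (∫⁻ z in (Iic T)ᶜ, Lfun a₂ b₂ z)
        ≤ (∫⁻ z in Iic T, Lfun a₁ b₁ z) + (∫⁻ z in (Iic T)ᶜ, Lfun a₂ b₂ z) := by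
      rw [tot2, ← hprod, ← tot1]
      exact add_le_add (le_refl _) hmono
    exact ENNReal.le_of_add_le_add_right hfin this

section Nu
variable {s : ℝ}

lemma nu_apply (s : ℝ) (A : Set ℝ) : nu s A = (ENNReal.ofReal s)⁻¹ * volume (A ∩ Ioo 0 s) := by
  rw [nu, Measure.smul_apply, Measure.restrict_apply' measurableSet_Ioo, smul_eq_mul]

theorem nu_prob (hs : 0 < s) : IsProbabilityMeasure (nu s) := by
  constructor
  rw [nu_apply, Set.univ_inter, Real.volume_Ioo, sub_zero,
    ENNReal.inv_mul_cancel (by simp [hs]) ENNReal.ofReal_ne_top]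

-- inner dead probability
lemma nu_dead_inner (hs : 0 < s) {q : ℝ} (hq : 0 < q) (c : ℝ) :
    nu s {v | q * v ≤ c}
      = (ENNReal.ofReal s)⁻¹ * ((ENNReal.ofReal q)⁻¹ * ENNReal.ofReal (min (q * s) c)) := by
  have hset : {v : ℝ | q * v ≤ c} = Iic (c / q) := by
    ext v
    simp only [Set.mem_setOf_eq, Set.mem_Iic]
    rw [le_div_iff₀ hq, mul_comm]
  rw [nu_apply, hset, Set.inter_comm, vol_Ioo_inter_Iic, sub_zero]
  congr 1
  have hr : q * min s (c / q) = min (q * s) c := by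
    rcases le_total s (c / q) with h | h
    · rw [min_eq_left h, min_eq_left (by rw [← le_div_iff₀' hq]; exact h)]
    · rw [min_eq_right h, min_eq_right (by rw [← div_le_iff₀' hq]; exact h),
        mul_div_cancel₀ _ (ne_of_gt hq)]
  rw [← hr, ENNReal.ofReal_mul (le_of_lt hq), ← mul_assoc,
    ENNReal.inv_mul_cancel (by simp [hq]) ENNReal.ofReal_ne_top, one_mul]

lemma scale_lintegral {c : ℝ} (hc : 0 < c) (s' : ℝ) (g : ℝ → ENNReal) (hg : Measurable g) :
    ∫⁻ x in Ioo 0 (c * s'), g x = ENNReal.ofReal c * ∫⁻ u in Ioo 0 s', g (c * u) := by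
  have hmap := Real.map_volume_mul_left (ne_of_gt hc)
  have hvol : volume = ENNReal.ofReal c • Measure.map (c * ·) volume := by
    rw [hmap, smul_smul, abs_of_pos (inv_pos.mpr hc), ← ENNReal.ofReal_mul (le_of_lt hc),
      mul_inv_cancel₀ (ne_of_gt hc), ENNReal.ofReal_one, one_smul]
  have hind : Measurable ((Ioo (0:ℝ) (c * s')).indicator g) := hg.indicator measurableSet_Ioo
  calc ∫⁻ x in Ioo 0 (c * s'), g x
      = ∫⁻ x, (Ioo 0 (c * s')).indicator g x ∂volume := (lintegral_indicator measurableSet_Ioo g).symm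
    _ = ENNReal.ofReal c * ∫⁻ x, (Ioo 0 (c * s')).indicator g x ∂(Measure.map (c * ·) volume) := by
        conv_lhs => rw [hvol]
        rw [lintegral_smul_measure, smul_eq_mul]
    _ = ENNReal.ofReal c * ∫⁻ u, (Ioo 0 (c * s')).indicator g (c * u) ∂volume := by
        rw [lintegral_map hind (measurable_const_mul c)]
    _ = ENNReal.ofReal c * ∫⁻ u, (Ioo 0 s').indicator (fun u => g (c * u)) u ∂volume := by
        congr 1
        apply lintegral_congr
        intro u
        by_cases h : u ∈ Ioo 0 s'
        · rw [Set.indicator_of_mem h]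
          have : c * u ∈ Ioo 0 (c * s') := by
            obtain ⟨h1, h2⟩ := h
            exact ⟨mul_pos hc h1, by exact (mul_lt_mul_iff_right₀ hc).mpr h2⟩
          rw [Set.indicator_of_mem this]
        · rw [Set.indicator_of_notMem h]
          have : c * u ∉ Ioo 0 (c * s') := by
            intro hmem
            obtain ⟨h1, h2⟩ := hmem
            exact h ⟨(mul_pos_iff_of_pos_left hc).mp h1, (mul_lt_mul_iff_right₀ hc).mp h2⟩
          rw [Set.indicator_of_notMem this]
    _ = ENNReal.ofReal c * ∫⁻ u in Ioo 0 s', g (c * u) := by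
        rw [lintegral_indicator measurableSet_Ioo]
end Nu

section Dead
variable {s : ℝ}

lemma dead_eq (hs : 0 < s) {p q : ℝ} (hp : 0 < p) (hq : 0 < q) (T : ℝ) :
    ∫⁻ u, nu s {v | p * u + q * v ≤ T} ∂(nu s)
      = (ENNReal.ofReal s)⁻¹ * (ENNReal.ofReal s)⁻¹ * ((ENNReal.ofReal (p * q))⁻¹
          * ∫⁻ z in Iic T, Lfun (p * s) (q * s) z) := by
  have hqs : (0:ℝ) < q * s := mul_pos hq hs
  have step1 : ∀ u : ℝ, nu s {v | p * u + q * v ≤ T}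
      = (ENNReal.ofReal s)⁻¹ * ((ENNReal.ofReal q)⁻¹
          * ENNReal.ofReal (min (q * s) (T - p * u))) := by
    intro u
    have : {v : ℝ | p * u + q * v ≤ T} = {v : ℝ | q * v ≤ T - p * u} := by
      ext v; simp only [Set.mem_setOf_eq]; constructor <;> intro h <;> linarith
    rw [this, nu_dead_inner hs hq]
  rw [lintegral_congr step1]
  rw [lintegral_const_mul _ (by fun_prop), lintegral_const_mul _ (by fun_prop)]
  -- now ∫⁻ u, ofReal (min (q*s) (T - p*u)) ∂(nu s)
  have hmeasg : Measurable (fun x : ℝ => ENNReal.ofReal (min (q * s) (T - x))) := by fun_prop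
  have : ∫⁻ u, ENNReal.ofReal (min (q * s) (T - p * u)) ∂(nu s)
      = (ENNReal.ofReal s)⁻¹ * ((ENNReal.ofReal p)⁻¹
          * ∫⁻ z in Iic T, Lfun (p * s) (q * s) z) := by
    rw [nu, lintegral_smul_measure]
    congr 1
    rw [L_slice]
    have := scale_lintegral hp s (fun x => ENNReal.ofReal (min (q * s) (T - x))) hmeasg
    rw [this, ← mul_assoc, ENNReal.inv_mul_cancel (by simp [hp]) ENNReal.ofReal_ne_top, one_mul]
  rw [this]
  rw [ENNReal.ofReal_mul (le_of_lt hp), ENNReal.mul_inv (by simp [hp]) (by simp)]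
  ring

lemma dead_compare (hs : 0 < s) {p₁ q₁ p₂ q₂ : ℝ} (T : ℝ)
    (h2 : 0 < p₂) (h21 : p₂ ≤ p₁) (h1 : p₁ ≤ q₁) (hb : q₁ ≤ q₂) (hprod : p₁ * q₁ = p₂ * q₂) :
    ∫⁻ u, nu s {v | p₂ * u + q₂ * v ≤ T} ∂(nu s)
      ≤ ∫⁻ u, nu s {v | p₁ * u + q₁ * v ≤ T} ∂(nu s) := by
  have hp1 : 0 < p₁ := lt_of_lt_of_le h2 h21
  have hq1 : 0 < q₁ := lt_of_lt_of_le hp1 h1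
  have hq2 : 0 < q₂ := lt_of_lt_of_le hq1 hb
  rw [dead_eq hs h2 hq2, dead_eq hs hp1 hq1, hprod]
  apply mul_le_mul_right
  apply mul_le_mul_right
  exact L_compare (p₁ * s) (q₁ * s) (p₂ * s) (q₂ * s) T (mul_pos h2 hs)
    (by nlinarith) (by nlinarith) (by nlinarith) (by nlinarith [sq_nonneg s])
end Dead

lemma update2_val {n : ℕ} (v : Fin n → ℝ) (j k : Fin n) (hjk : j ≠ k) (δ : ℝ) (i : Fin n) :
    Function.update (Function.update v j (v j + δ)) k (v k - δ) i
      = v i + (if i = j then δ else 0) - (if i = k then δ else 0) := by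
  rcases eq_or_ne i k with rfl | hik
  · simp [Function.update, hjk.symm]
  · rcases eq_or_ne i j with rfl | hij
    · simp [Function.update, hik, hjk]
    · simp [Function.update, hik, hij]

lemma sum_update2 {n : ℕ} (v : Fin n → ℝ) (j k : Fin n) (hjk : j ≠ k) (δ : ℝ)
    (S : Finset (Fin n)) :
    ∑ i ∈ S, Function.update (Function.update v j (v j + δ)) k (v k - δ) i
      = ∑ i ∈ S, v i + (if j ∈ S then δ else 0) - (if k ∈ S then δ else 0) := by
  have : ∀ i ∈ S, Function.update (Function.update v j (v j + δ)) k (v k - δ) i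
      = v i + (if i = j then δ else 0) - (if i = k then δ else 0) :=
    fun i _ => update2_val v j k hjk δ i
  rw [Finset.sum_congr rfl this]
  simp [Finset.sum_add_distrib, Finset.sum_sub_distrib, Finset.sum_ite_eq']

lemma chain_aux {n : ℕ} (F : (Fin n → ℝ) → ENNReal)
    (htr : ∀ (w : Fin n → ℝ) (i j : Fin n) (δ : ℝ), i ≠ j → 0 ≤ δ → w i + δ ≤ w j - δ →
      F w ≤ F (Function.update (Function.update w i (w i + δ)) j (w j - δ))) :
    ∀ N : ℕ, ∀ u v : Fin n → ℝ, Monotone u → Monotone v →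
      (∑ i, u i = ∑ i, v i) →
      (∀ k : Fin n, ∑ i ∈ Finset.Ici k, u i ≤ ∑ i ∈ Finset.Ici k, v i) →
      ((Finset.univ.filter (fun i => u i ≠ v i)).card ≤ N) →
      F v ≤ F u := by
  intro N
  induction N with
  | zero =>
    intro u v hu hv hsum htail hcard
    have : ∀ i, u i = v i := by
      intro i
      by_contra h
      have : i ∈ Finset.univ.filter (fun i => u i ≠ v i) := by simp [h]
      have := Finset.card_pos.mpr ⟨i, this⟩
      omega
    have : u = v := funext this
    rw [this]
  | succ N ih =>
    intro u v hu hv hsum htail hcard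
    by_cases huv : u = v
    · rw [huv]
    -- the set of indices where v < u is nonempty
    have hneg : (Finset.univ.filter (fun i => v i < u i)).Nonempty := by
      by_contra h
      rw [Finset.not_nonempty_iff_eq_empty, Finset.filter_eq_empty_iff] at h
      have hle : ∀ i ∈ Finset.univ, u i ≤ v i := fun i _ => le_of_not_gt (h (by simp))
      have := (Finset.sum_eq_sum_iff_of_le hle).mp hsum
      exact huv (funext fun i => this i (by simp))
    set j := (Finset.univ.filter (fun i => v i < u i)).max' hneg with hj_def
    have hj : v j < u j := by
      have := (Finset.univ.filter (fun i => v i < u i)).max'_mem hneg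
      simpa using this
    have hafter : ∀ i, j < i → u i ≤ v i := by
      intro i hi
      by_contra h
      push_neg at h
      have : i ∈ Finset.univ.filter (fun i => v i < u i) := by simp [h]
      exact absurd (Finset.le_max' _ i this) (not_le.mpr hi)
    -- the set of indices after j where u < v is nonempty
    have hIci : ∑ i ∈ Finset.Ici j, (v i - u i) ≥ 0 := by
      rw [Finset.sum_sub_distrib]
      linarith [htail j]
    have hpos : (Finset.univ.filter (fun i => j < i ∧ u i < v i)).Nonempty := by
      by_contra h
      rw [Finset.not_nonempty_iff_eq_empty, Finset.filter_eq_empty_iff] at h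
      have hle : ∀ i ∈ Finset.Ioi j, v i - u i ≤ 0 := by
        intro i hi
        rw [Finset.mem_Ioi] at hi
        have h2 := h (Finset.mem_univ i)
        push_neg at h2
        linarith [h2 hi]
      have hIoi : ∑ i ∈ Finset.Ioi j, (v i - u i) ≤ 0 := Finset.sum_nonpos hle
      have hsplit : ∑ i ∈ Finset.Ici j, (v i - u i)
          = (v j - u j) + ∑ i ∈ Finset.Ioi j, (v i - u i) := by
        have hins : Finset.Ici j = insert j (Finset.Ioi j) := by
          ext x
          simp only [Finset.mem_Ici, Finset.mem_insert, Finset.mem_Ioi]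
          constructor
          · intro h'; rcases eq_or_lt_of_le h' with h'' | h''
            · exact Or.inl h''.symm
            · exact Or.inr h''
          · rintro (rfl | h')
            · exact le_refl _
            · exact le_of_lt h'
        rw [hins, Finset.sum_insert (by simp)]
      linarith
    set k := (Finset.univ.filter (fun i => j < i ∧ u i < v i)).min' hpos with hk_def
    have hk : j < k ∧ u k < v k := by
      have hmm := (Finset.univ.filter (fun i => j < i ∧ u i < v i)).min'_mem hpos
      rw [Finset.mem_filter] at hmm
      exact hmm.2
    have hmid : ∀ i, j < i → i < k → u i = v i := by
      intro i h1 h2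
      refine le_antisymm (hafter i h1) ?_
      by_contra h
      push_neg at h
      have : i ∈ Finset.univ.filter (fun i => j < i ∧ u i < v i) := by simp [h1, h]
      exact absurd (Finset.min'_le _ i this) (not_le.mpr h2)
    have hjk : j ≠ k := ne_of_lt hk.1
    set δ := min (u j - v j) (v k - u k) with hδ_def
    have hδpos : 0 < δ := lt_min (by linarith) (by linarith [hk.2])
    set v' := Function.update (Function.update v j (v j + δ)) k (v k - δ) with hv'_def
    have hv'j : v' j = v j + δ := by
      rw [hv'_def, update2_val v j k hjk δ]
      simp [hjk]
    have hv'k : v' k = v k - δ := by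
      rw [hv'_def, update2_val v j k hjk δ]
      simp [hjk.symm]
    have hv'other : ∀ i, i ≠ j → i ≠ k → v' i = v i := by
      intro i h1 h2
      rw [hv'_def, update2_val v j k hjk δ]
      simp [h1, h2]
    have f1 : v j + δ ≤ u j := by
      have := min_le_left (u j - v j) (v k - u k)
      rw [← hδ_def] at this; linarith
    have f2 : u k ≤ v k - δ := by
      have := min_le_right (u j - v j) (v k - u k)
      rw [← hδ_def] at this; linarith
    -- monotonicity of v'
    have hv' : Monotone v' := by
      intro i i' hii'
      rcases eq_or_ne i j with rfl | hij
      · rcases eq_or_ne i' j with rfl | hi'j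
        · exact le_refl _
        · have hji' : j < i' := lt_of_le_of_ne hii' (Ne.symm hi'j)
          rcases eq_or_ne i' k with rfl | hi'k
          · rw [hv'j, hv'k]
            calc v j + δ ≤ u j := f1
              _ ≤ u k := hu (le_of_lt hji')
              _ ≤ v k - δ := f2
          · rw [hv'j, hv'other i' hi'j hi'k]
            rcases lt_trichotomy i' k with h | heq | h
            · calc v j + δ ≤ u j := f1
                _ ≤ u i' := hu (le_of_lt hji')
                _ = v i' := hmid i' hji' h
            · exact absurd heq hi'k
            · calc v j + δ ≤ u j := f1
                _ ≤ u k := hu (le_of_lt hk.1)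
                _ ≤ v k - δ := f2
                _ ≤ v k := by linarith
                _ ≤ v i' := hv (le_of_lt h)
      · rcases eq_or_ne i k with rfl | hik
        · -- i = k, so i' ≥ k, i' ≠ j
          rcases eq_or_ne i' k with rfl | hi'k
          · exact le_refl _
          · have hki' : k < i' := lt_of_le_of_ne hii' (Ne.symm hi'k)
            have hi'j : i' ≠ j := fun h => absurd (h ▸ hki') (not_lt.mpr (le_of_lt hk.1))
            rw [hv'k, hv'other i' hi'j hi'k]
            calc v k - δ ≤ v k := by linarith
              _ ≤ v i' := hv (le_of_lt hki')
        · -- i ∉ {j,k}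
          rcases eq_or_ne i' j with rfl | hi'j
          · -- i < j
            have : i < j := lt_of_le_of_ne hii' hij
            rw [hv'other i hij hik, hv'j]
            calc v i ≤ v j := hv (le_of_lt this)
              _ ≤ v j + δ := by linarith
          · rcases eq_or_ne i' k with rfl | hi'k
            · have hik' : i < k := lt_of_le_of_ne hii' hik
              rw [hv'other i hij hik, hv'k]
              rcases lt_trichotomy i j with h | heq | h
              · calc v i ≤ v j := hv (le_of_lt h)
                  _ ≤ v j + δ := by linarith
                  _ ≤ u j := f1
                  _ ≤ u k := hu (le_of_lt hk.1)
                  _ ≤ v k - δ := f2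
              · exact absurd heq hij
              · calc v i = u i := (hmid i h hik').symm
                  _ ≤ u k := hu (le_of_lt hik')
                  _ ≤ v k - δ := f2
            · rw [hv'other i hij hik, hv'other i' hi'j hi'k]
              exact hv hii'
    -- total sum
    have hsum' : ∑ i, u i = ∑ i, v' i := by
      rw [hv'_def, sum_update2 v j k hjk δ]
      simp [hsum]
    -- tail sums
    have htail' : ∀ m : Fin n, ∑ i ∈ Finset.Ici m, u i ≤ ∑ i ∈ Finset.Ici m, v' i := by
      intro m
      rw [hv'_def, sum_update2 v j k hjk δ]
      simp only [Finset.mem_Ici]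
      by_cases hmj : m ≤ j
      · have hmk : m ≤ k := le_trans hmj (le_of_lt hk.1)
        simp only [if_pos hmj, if_pos hmk]
        linarith [htail m]
      · by_cases hmk : m ≤ k
        · simp only [if_neg hmj, if_pos hmk]
          -- need: tail_m u ≤ tail_m v - δ
          have hterm : ∀ i ∈ Finset.Ici m, 0 ≤ v i - u i := by
            intro i hi
            rw [Finset.mem_Ici] at hi
            have : j < i := lt_of_lt_of_le (not_le.mp hmj) hi
            linarith [hafter i this]
          have hksum : v k - u k ≤ ∑ i ∈ Finset.Ici m, (v i - u i) :=
            Finset.single_le_sum hterm (by simpa using hmk)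
          rw [Finset.sum_sub_distrib] at hksum
          have : δ ≤ v k - u k := min_le_right _ _
          linarith
        · simp only [if_neg hmj, if_neg hmk]
          linarith [htail m]
    -- card decreases
    have hsub : Finset.univ.filter (fun i => u i ≠ v' i) ⊆ Finset.univ.filter (fun i => u i ≠ v i) := by
      intro i hi
      simp only [Finset.mem_filter, Finset.mem_univ, true_and] at hi ⊢
      rcases eq_or_ne i j with rfl | hij
      · exact ne_of_gt hj
      · rcases eq_or_ne i k with rfl | hik
        · exact ne_of_lt hk.2
        · rw [hv'other i hij hik] at hi
          exact hi
    have hstrict : ∃ i ∈ Finset.univ.filter (fun i => u i ≠ v i),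
        i ∉ Finset.univ.filter (fun i => u i ≠ v' i) := by
      rcases min_cases (u j - v j) (v k - u k) with ⟨heq, _⟩ | ⟨heq, _⟩
      · refine ⟨j, by simp [ne_of_gt hj], ?_⟩
        simp only [Finset.mem_filter, Finset.mem_univ, true_and, not_not]
        rw [hv'j, ← hδ_def] at *
        rw [heq]; ring
      · refine ⟨k, by simp [ne_of_lt hk.2], ?_⟩
        simp only [Finset.mem_filter, Finset.mem_univ, true_and, not_not]
        rw [hv'k, ← hδ_def] at *
        rw [heq]; ring
    have hcard' : (Finset.univ.filter (fun i => u i ≠ v' i)).card ≤ N := by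
      obtain ⟨i, hi1, hi2⟩ := hstrict
      have : (Finset.univ.filter (fun i => u i ≠ v' i)).card
          < (Finset.univ.filter (fun i => u i ≠ v i)).card :=
        Finset.card_lt_card (Finset.ssubset_iff_of_subset hsub |>.mpr ⟨i, hi1, hi2⟩)
      omega
    have step : F v ≤ F v' := by
      have := htr v j k δ hjk (le_of_lt hδpos) (by linarith [hu (le_of_lt hk.1)])
      rwa [← hv'_def] at this
    exact le_trans step (ih u v' hu hv' hsum' htail' hcard')

lemma chain_main {n : ℕ} (F : (Fin n → ℝ) → ENNReal)
    (hsym : ∀ (w : Fin n → ℝ) (σ : Equiv.Perm (Fin n)), F (w ∘ σ) = F w)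
    (htr : ∀ (w : Fin n → ℝ) (i j : Fin n) (δ : ℝ), i ≠ j → 0 ≤ δ → w i + δ ≤ w j - δ →
      F w ≤ F (Function.update (Function.update w i (w i + δ)) j (w j - δ)))
    (u v : Fin n → ℝ) (hmaj : IsMajorizedBy u v) : F v ≤ F u := by
  set u' := u ∘ Tuple.sort u with hu'_def
  set v' := v ∘ Tuple.sort v with hv'_def
  have hsum : ∑ i, u' i = ∑ i, v' i := by
    rw [hu'_def, hv'_def]
    rw [show ∑ i, (u ∘ Tuple.sort u) i = ∑ i, u i from Equiv.sum_comp _ u]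
    rw [show ∑ i, (v ∘ Tuple.sort v) i = ∑ i, v i from Equiv.sum_comp _ v]
    exact hmaj.1
  have htail : ∀ k : Fin n, ∑ i ∈ Finset.Ici k, u' i ≤ ∑ i ∈ Finset.Ici k, v' i := by
    intro k
    exact hmaj.2 k
  calc F v = F v' := (hsym v _).symm
    _ ≤ F u' := chain_aux F htr _ u' v' (Tuple.monotone_sort u) (Tuple.monotone_sort v)
        hsum htail (le_refl _)
    _ = F u := hsym u _

lemma pi_perm {n : ℕ} {s : ℝ} (hs : 0 < s) (t : ℝ) (w : Fin n → ℝ) (σ : Equiv.Perm (Fin n)) :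
    (Measure.pi fun _ : Fin n => nu s) {y | ∑ k, Real.exp ((w ∘ σ) k) * y k ≤ t}
      = (Measure.pi fun _ : Fin n => nu s) {y | ∑ k, Real.exp (w k) * y k ≤ t} := by
  haveI := nu_prob hs
  have hmp := measurePreserving_piCongrLeft (fun _ : Fin n => nu s) σ
  set e := MeasurableEquiv.piCongrLeft (fun _ : Fin n => ℝ) σ with he_def
  have hB : MeasurableSet {y : Fin n → ℝ | ∑ k, Real.exp (w k) * y k ≤ t} :=
    measurableSet_le (by fun_prop) measurable_const
  have hpre : (⇑e) ⁻¹' {y | ∑ k, Real.exp (w k) * y k ≤ t}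
      = {g : Fin n → ℝ | ∑ k, Real.exp ((w ∘ σ) k) * g k ≤ t} := by
    ext g
    simp only [Set.mem_preimage, Set.mem_setOf_eq]
    have he : ∀ i, e g i = g (σ.symm i) := by
      intro i
      have h2 := MeasurableEquiv.piCongrLeft_apply_apply (β := fun _ : Fin n => ℝ) σ g (σ.symm i)
      rwa [Equiv.apply_symm_apply] at h2
    have hsum : ∑ k, Real.exp (w k) * e g k = ∑ k, Real.exp ((w ∘ σ) k) * g k := by
      rw [Finset.sum_congr rfl fun k _ => by rw [he k]]
      rw [← Equiv.sum_comp σ (fun k => Real.exp (w k) * g (σ.symm k))]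
      apply Finset.sum_congr rfl
      intro k _
      simp [Equiv.symm_apply_apply]
    rw [hsum]
  have hfin := hmp.measure_preimage hB.nullMeasurableSet
  rw [hpre] at hfin
  exact hfin

lemma sum_mul_update2 {n : ℕ} (c x : Fin n → ℝ) (i j : Fin n) (hij : i ≠ j) (u v : ℝ) :
    ∑ k, c k * (Function.update (Function.update x i u) j v) k
      = c i * u + c j * v + ∑ k ∈ (Finset.univ.erase j).erase i, c k * x k := by
  rw [← Finset.sum_erase_add _ _ (Finset.mem_univ j)]
  have h1 : ∀ k ∈ Finset.univ.erase j, c k * (Function.update (Function.update x i u) j v) k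
      = c k * (Function.update x i u) k := by
    intro k hk
    rw [Function.update_of_ne (Finset.ne_of_mem_erase hk)]
  rw [Finset.sum_congr rfl h1, Function.update_self]
  have hi : i ∈ Finset.univ.erase j := Finset.mem_erase.mpr ⟨hij, Finset.mem_univ i⟩
  rw [← Finset.sum_erase_add _ _ hi]
  have h2 : ∀ k ∈ (Finset.univ.erase j).erase i, c k * (Function.update x i u) k = c k * x k := by
    intro k hk
    rw [Function.update_of_ne (Finset.ne_of_mem_erase hk)]
  rw [Finset.sum_congr rfl h2, Function.update_self]
  ring

lemma inner_eval {n : ℕ} {s : ℝ} (hs : 0 < s) (t : ℝ) (c x : Fin n → ℝ) (i j : Fin n)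
    (hij : i ≠ j) (u : ℝ) :
    ∫⁻ v, ({y : Fin n → ℝ | ∑ k, c k * y k ≤ t}).indicator (1 : (Fin n → ℝ) → ℝ≥0∞)
        (Function.update (Function.update x i u) j v) ∂(nu s)
      = nu s {v | c i * u + c j * v
          ≤ t - ∑ k ∈ (Finset.univ.erase j).erase i, c k * x k} := by
  set R := ∑ k ∈ (Finset.univ.erase j).erase i, c k * x k with hR
  have hset : ∀ v : ℝ, (Function.update (Function.update x i u) j v
      ∈ {y : Fin n → ℝ | ∑ k, c k * y k ≤ t}) ↔ (c i * u + c j * v ≤ t - R) := by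
    intro v
    rw [Set.mem_setOf_eq, sum_mul_update2 c x i j hij u v, ← hR]
    constructor <;> intro h <;> linarith
  have hpt : ∀ v : ℝ, ({y : Fin n → ℝ | ∑ k, c k * y k ≤ t}).indicator (1 : (Fin n → ℝ) → ℝ≥0∞)
      (Function.update (Function.update x i u) j v)
      = ({v : ℝ | c i * u + c j * v ≤ t - R}).indicator (1 : ℝ → ℝ≥0∞) v := by
    intro v
    by_cases h : c i * u + c j * v ≤ t - R
    · rw [Set.indicator_of_mem ((hset v).mpr h),
        Set.indicator_of_mem (show v ∈ {v : ℝ | c i * u + c j * v ≤ t - R} from h)]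
      rfl
    · rw [Set.indicator_of_notMem (fun hmem => h ((hset v).mp hmem)),
        Set.indicator_of_notMem (show v ∉ {v : ℝ | c i * u + c j * v ≤ t - R} from h)]
  rw [lintegral_congr hpt, lintegral_indicator_one]
  exact measurableSet_le (by fun_prop) measurable_const

lemma pi_transfer {n : ℕ} {s : ℝ} (hs : 0 < s) (t : ℝ) (w : Fin n → ℝ) (i j : Fin n) (δ : ℝ)
    (hij : i ≠ j) (hδ : 0 ≤ δ) (hcond : w i + δ ≤ w j - δ) :
    (Measure.pi fun _ : Fin n => nu s) {y | ∑ k, Real.exp (w k) * y k ≤ t}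
      ≤ (Measure.pi fun _ : Fin n => nu s)
        {y | ∑ k, Real.exp
          ((Function.update (Function.update w i (w i + δ)) j (w j - δ)) k) * y k ≤ t} := by
  haveI := nu_prob hs
  set w' := Function.update (Function.update w i (w i + δ)) j (w j - δ) with hw'
  have hw'i : w' i = w i + δ := by
    rw [hw', Function.update_of_ne hij, Function.update_self]
  have hw'j : w' j = w j - δ := by rw [hw', Function.update_self]
  have hw'other : ∀ k, k ≠ i → k ≠ j → w' k = w k := by
    intro k h1 h2
    rw [hw', Function.update_of_ne h2, Function.update_of_ne h1]
  set A := {y : Fin n → ℝ | ∑ k, Real.exp (w k) * y k ≤ t} with hA_def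
  set A' := {y : Fin n → ℝ | ∑ k, Real.exp (w' k) * y k ≤ t} with hA'_def
  have hA : MeasurableSet A := measurableSet_le (by fun_prop) measurable_const
  have hA' : MeasurableSet A' := measurableSet_le (by fun_prop) measurable_const
  have hf : Measurable (A.indicator (1 : (Fin n → ℝ) → ℝ≥0∞)) := measurable_one.indicator hA
  have hg : Measurable (A'.indicator (1 : (Fin n → ℝ) → ℝ≥0∞)) := measurable_one.indicator hA'
  rw [← lintegral_indicator_one hA, ← lintegral_indicator_one hA']
  apply lintegral_le_of_lmarginal_le ({i, j} : Finset (Fin n)) hf hg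
  intro x
  have hins : ({i, j} : Finset (Fin n)) = insert i ({j} : Finset (Fin n)) := rfl
  rw [hins, lmarginal_insert _ hf (by simp [hij]), lmarginal_insert _ hg (by simp [hij])]
  simp only [lmarginal_singleton]
  have lhs_eq : ∀ u : ℝ, ∫⁻ v, A.indicator 1 (Function.update (Function.update x i u) j v) ∂(nu s)
      = nu s {v | Real.exp (w i) * u + Real.exp (w j) * v
          ≤ t - ∑ k ∈ (Finset.univ.erase j).erase i, Real.exp (w k) * x k} :=
    fun u => inner_eval hs t (fun k => Real.exp (w k)) x i j hij u
  have rhs_eq : ∀ u : ℝ, ∫⁻ v, A'.indicator 1 (Function.update (Function.update x i u) j v) ∂(nu s)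
      = nu s {v | Real.exp (w' i) * u + Real.exp (w' j) * v
          ≤ t - ∑ k ∈ (Finset.univ.erase j).erase i, Real.exp (w' k) * x k} :=
    fun u => inner_eval hs t (fun k => Real.exp (w' k)) x i j hij u
  rw [lintegral_congr lhs_eq, lintegral_congr rhs_eq]
  have hRR : ∑ k ∈ (Finset.univ.erase j).erase i, Real.exp (w' k) * x k
      = ∑ k ∈ (Finset.univ.erase j).erase i, Real.exp (w k) * x k := by
    apply Finset.sum_congr rfl
    intro k hk
    rw [hw'other k (Finset.ne_of_mem_erase hk)
      (Finset.ne_of_mem_erase (Finset.mem_of_mem_erase hk))]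
  rw [hRR, hw'i, hw'j]
  exact dead_compare hs _ (Real.exp_pos _) (Real.exp_le_exp.mpr (by linarith))
    (Real.exp_le_exp.mpr hcond) (Real.exp_le_exp.mpr (by linarith))
    (by rw [← Real.exp_add, ← Real.exp_add]; ring_nf)

lemma joint_law {Ω : Type*} [MeasurableSpace Ω] (P : Measure Ω) [IsProbabilityMeasure P]
    (n : ℕ) (Y : Fin n → Ω → ℝ) {s : ℝ} (hs : 0 < s)
    (hY_meas : ∀ i, Measurable (Y i))
    (h_indep : iIndepFun Y P)
    (h_law : ∀ i, P.map (Y i) = nu s) :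
    P.map (fun ω => fun i => Y i ω) = Measure.pi (fun _ : Fin n => nu s) := by
  haveI := nu_prob hs
  symm
  apply Measure.pi_eq
  intro A hA
  have hmeas : Measurable (fun ω => fun i => Y i ω) := measurable_pi_lambda _ hY_meas
  rw [Measure.map_apply hmeas (MeasurableSet.univ_pi hA)]
  have hpre : (fun ω => fun i => Y i ω) ⁻¹' (Set.pi Set.univ A)
      = ⋂ i ∈ Finset.univ, Y i ⁻¹' A i := by
    ext ω
    simp [Set.mem_univ_pi]
  rw [hpre, h_indep.measure_inter_preimage_eq_mul Finset.univ (fun i _ => hA i)]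
  apply Finset.prod_congr rfl
  intro i _
  rw [← h_law i, Measure.map_apply (hY_meas i) (hA i)]

theorem uniform_weighted_sums_st_order
    {Ω : Type*} [MeasurableSpace Ω] (P : Measure Ω) [IsProbabilityMeasure P]
    (n : ℕ) (Y : Fin n → Ω → ℝ) (s : ℝ) (hs : 0 < s)
    (hY_meas : ∀ i, Measurable (Y i))
    (h_indep : iIndepFun Y P)
    (h_law : ∀ i, P.map (Y i) = (ENNReal.ofReal s)⁻¹ • volume.restrict (Set.Ioo 0 s))
    (a b : Fin n → ℝ) (ha : ∀ i, 0 < a i) (hb : ∀ i, 0 < b i)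
    (hmaj : IsMajorizedBy (fun i => Real.log (a i)) (fun i => Real.log (b i))) :
    ∀ t : ℝ, P {ω | t < ∑ i, a i * Y i ω} ≤ P {ω | t < ∑ i, b i * Y i ω} := by
  intro t
  haveI := nu_prob (s := s) hs
  have h_law' : ∀ i, P.map (Y i) = nu s := fun i => by rw [h_law i, nu]
  have hjoint := joint_law P n Y hs hY_meas h_indep h_law'
  set π := Measure.pi (fun _ : Fin n => nu s) with hπ
  haveI : IsProbabilityMeasure π := by rw [hπ]; infer_instance
  have hmeasmap : Measurable (fun ω => fun i => Y i ω) := measurable_pi_lambda _ hY_meas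
  have key1 : ∀ c : Fin n → ℝ, P {ω | t < ∑ i, c i * Y i ω} = π {y | t < ∑ i, c i * y i} := by
    intro c
    have hBm : MeasurableSet {y : Fin n → ℝ | t < ∑ i, c i * y i} :=
      measurableSet_lt measurable_const (by fun_prop)
    rw [← hjoint, Measure.map_apply hmeasmap hBm]
    congr 1
  rw [key1 a, key1 b]
  have hcompl : ∀ c : Fin n → ℝ,
      {y : Fin n → ℝ | t < ∑ i, c i * y i} = {y : Fin n → ℝ | ∑ i, c i * y i ≤ t}ᶜ := by
    intro c
    ext y
    simp [not_le]
  have hdm : ∀ c : Fin n → ℝ, MeasurableSet {y : Fin n → ℝ | ∑ i, c i * y i ≤ t} :=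
    fun c => measurableSet_le (by fun_prop) measurable_const
  rw [hcompl a, hcompl b, prob_compl_eq_one_sub (hdm a), prob_compl_eq_one_sub (hdm b)]
  apply tsub_le_tsub_left ?_ 1
  -- chain argument
  have hF := chain_main (fun w => π {y | ∑ k, Real.exp (w k) * y k ≤ t})
    (fun w σ => pi_perm hs t w σ)
    (fun w i j δ h1 h2 h3 => pi_transfer hs t w i j δ h1 h2 h3)
    (fun i => Real.log (a i)) (fun i => Real.log (b i)) hmaj
  have ea : {y : Fin n → ℝ | ∑ k, Real.exp (Real.log (a k)) * y k ≤ t}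
      = {y : Fin n → ℝ | ∑ i, a i * y i ≤ t} := by
    ext y
    simp only [Set.mem_setOf_eq]
    rw [Finset.sum_congr rfl fun k _ => by rw [Real.exp_log (ha k)]]
  have eb : {y : Fin n → ℝ | ∑ k, Real.exp (Real.log (b k)) * y k ≤ t}
      = {y : Fin n → ℝ | ∑ i, b i * y i ≤ t} := by
    ext y
    simp only [Set.mem_setOf_eq]
    rw [Finset.sum_congr rfl fun k _ => by rw [Real.exp_log (hb k)]]
  simp only [ea, eb] at hF
  exact hF
end

section
/- Let Y_1, ..., Y_n be i.i.d. random variables with a common log-normal distribution (Y_i = e^{Z_i} where Z_i is normal with mean μ and variance σ² > 0). If a = (a_1, ..., a_n) and b = (b_1, ..., b_n) are vectors of positive reals such that (log a_1, ..., log a_n) is majorized by (log b_1, ..., log b_n), then ∑_{i=1}^n a_i Y_i ≤_st ∑_{i=1}^n b_i Y_i. -/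
open MeasureTheory ProbabilityTheory Real Set

namespace LogNormalSt

lemma gpdf_anti {m : ℝ} {v : NNReal} {x y : ℝ} (h : |x - m| ≤ |y - m|) :
    gaussianPDFReal m v y ≤ gaussianPDFReal m v x := by
  unfold gaussianPDFReal
  refine mul_le_mul_of_nonneg_left ?_ (by positivity)
  refine Real.exp_le_exp.2 ?_
  have hsq : (x - m)^2 ≤ (y - m)^2 := by
    rw [← sq_abs (x - m), ← sq_abs (y - m)]
    exact pow_le_pow_left₀ (abs_nonneg _) h 2
  have h2v : (0:ℝ) ≤ 2 * v := by positivity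
  gcongr ?_ / (2*(v:ℝ))
  linarith

lemma gauss_singleton {m : ℝ} {v : NNReal} (hv : v ≠ 0) (c : ℝ) :
    gaussianReal m v {c} = 0 := by
  rw [gaussianReal_apply _ hv]
  rw [setLIntegral_measure_zero _ _ (by simp)]

/-- Shifting an interval to the right (by `c ≥ 0`, starting at `u ≥ -c/2`) decreases its
centered-Gaussian measure. -/
lemma gauss_shift_Ioc {v : NNReal} (hv : v ≠ 0) {u w c : ℝ} (hc : 0 ≤ c) (hu : -(c/2) ≤ u) :
    gaussianReal 0 v (Ioc (u + c) (w + c)) ≤ gaussianReal 0 v (Ioc u w) := by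
  rw [gaussianReal_apply _ hv, gaussianReal_apply _ hv]
  have hmp : MeasurePreserving (fun x : ℝ => x + c) volume volume :=
    measurePreserving_add_right volume c
  have hemb : MeasurableEmbedding (fun x : ℝ => x + c) :=
    (Homeomorph.addRight c).measurableEmbedding
  have hpre : (fun x : ℝ => x + c) ⁻¹' Ioc (u + c) (w + c) = Ioc u w := by
    ext x; simp [Set.mem_Ioc]
  calc ∫⁻ x in Ioc (u + c) (w + c), gaussianPDF 0 v x
      = ∫⁻ x in Ioc u w, gaussianPDF 0 v (x + c) := by
        rw [← hmp.setLIntegral_comp_preimage_emb hemb, hpre]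
    _ ≤ ∫⁻ x in Ioc u w, gaussianPDF 0 v x := by
        refine setLIntegral_mono (measurable_gaussianPDF _ _) fun x hx => ?_
        refine ENNReal.ofReal_le_ofReal (gpdf_anti ?_)
        have hx1 : u < x := hx.1
        rw [sub_zero, sub_zero, ← Real.sqrt_sq_eq_abs, ← Real.sqrt_sq_eq_abs]
        exact Real.sqrt_le_sqrt (by nlinarith)

/-- For a centered Gaussian, the measure of the region at distance `> m` from a point `d ≥ 0`
is monotone in `d`. -/
lemma gauss_outside_mono {v : NNReal} (hv : v ≠ 0) {m d d' : ℝ} (hm : 0 ≤ m)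
    (hd : 0 ≤ d) (hdd : d ≤ d') :
    gaussianReal 0 v {x | m < |x - d|} ≤ gaussianReal 0 v {x | m < |x - d'|} := by
  have hset : ∀ e : ℝ, {x : ℝ | m < |x - e|} = Iio (e - m) ∪ Ioi (e + m) := by
    intro e; ext x
    simp only [mem_setOf_eq, mem_union, mem_Iio, mem_Ioi, lt_abs, lt_sub_iff_add_lt]
    constructor
    · rintro (h | h)
      · right; linarith
      · left; linarith
    · rintro (h | h)
      · right; linarith
      · left; linarith
  rw [hset, hset]
  have hdisj : ∀ e : ℝ, Disjoint (Iio (e - m)) (Ioi (e + m)) := by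
    intro e
    exact (Set.Iio_disjoint_Ici (by linarith)).mono_right Set.Ioi_subset_Ici_self
  rw [measure_union (hdisj d) measurableSet_Ioi, measure_union (hdisj d') measurableSet_Ioi]
  have hIco : gaussianReal 0 v (Ico (d-m) (d'-m)) = gaussianReal 0 v (Ioc (d-m) (d'-m)) := by
    rcases lt_or_ge (d-m) (d'-m) with h | h
    · rw [← Set.Ioo_union_left h, ← Set.Ioo_union_right h,
        measure_union (Set.disjoint_singleton_right.2 (by simp)) (measurableSet_singleton _),
        measure_union (Set.disjoint_singleton_right.2 (by simp)) (measurableSet_singleton _),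
        gauss_singleton hv, gauss_singleton hv]
    · rw [Set.Ico_eq_empty (not_lt.2 h), Set.Ioc_eq_empty (not_lt.2 h)]
  have h1 : gaussianReal 0 v (Iio (d' - m))
      = gaussianReal 0 v (Iio (d - m)) + gaussianReal 0 v (Ico (d-m) (d'-m)) := by
    rw [← measure_union ((Set.Iio_disjoint_Ici (le_refl (d-m))).mono_right Set.Ico_subset_Ici_self)
      measurableSet_Ico, Set.Iio_union_Ico_eq_Iio (by linarith)]
  have h2 : gaussianReal 0 v (Ioi (d + m))
      = gaussianReal 0 v (Ioc (d+m) (d'+m)) + gaussianReal 0 v (Ioi (d' + m)) := by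
    rw [← measure_union (Set.Ioc_disjoint_Ioi le_rfl) measurableSet_Ioi,
      Set.Ioc_union_Ioi_eq_Ioi (by linarith)]
  have hshift : gaussianReal 0 v (Ioc (d+m) (d'+m)) ≤ gaussianReal 0 v (Ioc (d-m) (d'-m)) := by
    have := gauss_shift_Ioc hv (u := d - m) (w := d' - m) (c := 2*m) (by linarith) (by linarith)
    convert this using 3 <;> ring
  rw [h1, h2, hIco]
  calc gaussianReal 0 v (Iio (d - m)) + (gaussianReal 0 v (Ioc (d+m) (d'+m)) + gaussianReal 0 v (Ioi (d' + m)))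
      ≤ gaussianReal 0 v (Iio (d - m)) + (gaussianReal 0 v (Ioc (d-m) (d'-m)) + gaussianReal 0 v (Ioi (d' + m))) := by
        gcongr
    _ = gaussianReal 0 v (Iio (d - m)) + gaussianReal 0 v (Ioc (d-m) (d'-m)) + gaussianReal 0 v (Ioi (d' + m)) := by
        ring

lemma measurableSet_absgt (m d : ℝ) : MeasurableSet {x : ℝ | m < |x - d|} := by
  have : {x : ℝ | m < |x - d|} = (fun x : ℝ => |x - d|) ⁻¹' Ioi m := rfl
  rw [this]
  exact ((measurable_id.sub_const d).abs) measurableSet_Ioi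

lemma gauss_map_neg {v : NNReal} : (gaussianReal 0 v).map (fun x : ℝ => -x) = gaussianReal 0 v := by
  have h := gaussianReal_map_const_mul (μ := 0) (v := v) (-1)
  have h1 : (fun x : ℝ => -1 * x) = (fun x : ℝ => -x) := by funext x; ring
  have h2 : (⟨(-1:ℝ)^2, sq_nonneg _⟩ : NNReal) = 1 := by ext; norm_num
  rw [show ((-1 : ℝ) * · ) = (fun x : ℝ => -x) from h1] at h
  rw [h]
  congr 1
  · ring
  · ext; simp

lemma gauss_outside_neg {v : NNReal} (m d : ℝ) :
    gaussianReal 0 v {x | m < |x - (-d)|} = gaussianReal 0 v {x | m < |x - d|} := by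
  conv_rhs => rw [← gauss_map_neg (v := v)]
  rw [Measure.map_apply measurable_neg (measurableSet_absgt m d)]
  congr 1
  ext x
  simp only [mem_preimage, mem_setOf_eq]
  rw [show -x - d = -(x - (-d)) by ring, abs_neg]

lemma gauss_outside_mono_abs {v : NNReal} (hv : v ≠ 0) {m d d' : ℝ} (hm : 0 ≤ m)
    (hdd : |d| ≤ |d'|) :
    gaussianReal 0 v {x | m < |x - d|} ≤ gaussianReal 0 v {x | m < |x - d'|} := by
  have e : ∀ e : ℝ, gaussianReal 0 v {x | m < |x - e|} = gaussianReal 0 v {x | m < |x - abs e|} := by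
    intro e
    rcases abs_cases e with ⟨h, _⟩ | ⟨h, _⟩
    · rw [h]
    · rw [h, gauss_outside_neg]
  rw [e d, e d']
  exact gauss_outside_mono hv hm (abs_nonneg d) hdd

/-- 1-D core: the Gaussian probability that `K * cosh (x - c)` exceeds `t` is monotone in the
distance from `c` to the mean. -/
lemma oneDimCore {v : NNReal} (hv : v ≠ 0) {K t θ c c' : ℝ} (hK : 0 < K)
    (hcc : |c - θ| ≤ |c' - θ|) :
    gaussianReal θ v {x | t < K * Real.cosh (x - c)} ≤
      gaussianReal θ v {x | t < K * Real.cosh (x - c')} := by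
  have hmeas : ∀ e : ℝ, MeasurableSet {x : ℝ | t < K * Real.cosh (x - e)} := by
    intro e
    have : {x : ℝ | t < K * Real.cosh (x - e)} =
        (fun x : ℝ => K * Real.cosh (x - e)) ⁻¹' Ioi t := rfl
    rw [this]
    exact ((continuous_const.mul (Real.continuous_cosh.comp
      (continuous_id.sub continuous_const))).measurable) measurableSet_Ioi
  have hmapθ : (gaussianReal 0 v).map (fun x : ℝ => x + θ) = gaussianReal θ v := by
    simpa using gaussianReal_map_add_const (μ := 0) (v := v) θ
  have key : ∀ e : ℝ, gaussianReal θ v {x | t < K * Real.cosh (x - e)} =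
      gaussianReal 0 v {x | t < K * Real.cosh (x - (e - θ))} := by
    intro e
    rw [← hmapθ, Measure.map_apply (measurable_add_const θ) (hmeas e)]
    congr 1
    ext x
    simp only [mem_preimage, mem_setOf_eq]
    rw [show x + θ - e = x - (e - θ) by ring]
  rw [key c, key c']
  rcases lt_or_ge t K with ht | ht
  · -- both events are everything
    have huniv : ∀ e : ℝ, {x : ℝ | t < K * Real.cosh (x - e)} = univ := by
      intro e; ext x
      simp only [mem_setOf_eq, mem_univ, iff_true]
      have := Real.one_le_cosh (x - e)
      nlinarith
    rw [huniv, huniv]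
  · -- events are the complement of an interval of fixed half-length m
    set u : ℝ := t / K with hu
    have hu1 : 1 ≤ u := (one_le_div hK).2 ht
    set s : ℝ := Real.sqrt (u^2 - 1) with hs
    have hs2 : s^2 = u^2 - 1 := Real.sq_sqrt (by nlinarith)
    have hsnn : 0 ≤ s := Real.sqrt_nonneg _
    set m : ℝ := Real.log (u + s) with hm
    have hus : (0:ℝ) < u + s := by nlinarith
    have hmnn : 0 ≤ m := Real.log_nonneg (by nlinarith)
    have hcoshm : Real.cosh m = u := by
      have hexp : Real.exp m = u + s := Real.exp_log hus
      have hinv : (u + s)⁻¹ = u - s := by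
        have hmul : (u + s) * (u - s) = 1 := by nlinarith
        exact inv_eq_of_mul_eq_one_right hmul
      rw [Real.cosh_eq, hexp, Real.exp_neg, hexp, hinv]
      ring
    have hev : ∀ e : ℝ, {x : ℝ | t < K * Real.cosh (x - e)} = {x : ℝ | m < |x - e|} := by
      intro e; ext x
      simp only [mem_setOf_eq]
      rw [show t < K * Real.cosh (x - e) ↔ u < Real.cosh (x - e) by
        rw [hu, div_lt_iff₀ hK]; constructor <;> intro h <;> linarith [h] ]
      rw [← hcoshm, Real.cosh_lt_cosh, abs_of_nonneg hmnn]
    rw [hev, hev]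
    exact gauss_outside_mono_abs hv hmnn hcc

lemma sqrt_exp (u : ℝ) : Real.sqrt (Real.exp u) = Real.exp (u / 2) := by
  rw [show Real.exp u = (Real.exp (u/2))^2 by rw [sq, ← Real.exp_add]; ring_nf]
  exact Real.sqrt_sq (Real.exp_pos _).le

lemma cosh_decomp {a1 a2 : ℝ} (ha1 : 0 < a1) (ha2 : 0 < a2) (s x : ℝ) :
    a1 * Real.exp x + a2 * Real.exp (s - x) =
      (2 * Real.sqrt (a1 * a2 * Real.exp s)) *
        Real.cosh (x - (s + Real.log a2 - Real.log a1) / 2) := by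
  have hsq : Real.sqrt (a1 * a2 * Real.exp s)
      = Real.exp ((Real.log a1 + Real.log a2 + s) / 2) := by
    rw [show a1 * a2 * Real.exp s = Real.exp (Real.log a1 + Real.log a2 + s) by
      rw [Real.exp_add, Real.exp_add, Real.exp_log ha1, Real.exp_log ha2], sqrt_exp]
  rw [hsq, Real.cosh_eq]
  set L1 := Real.log a1
  set L2 := Real.log a2
  have e1 : Real.exp ((L1 + L2 + s) / 2) * Real.exp (x - (s + L2 - L1) / 2)
      = a1 * Real.exp x := by
    rw [← Real.exp_add, show (L1 + L2 + s) / 2 + (x - (s + L2 - L1) / 2) = L1 + x by ring,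
      Real.exp_add, Real.exp_log ha1]
  have e2 : Real.exp ((L1 + L2 + s) / 2) * Real.exp (-(x - (s + L2 - L1) / 2))
      = a2 * Real.exp (s - x) := by
    rw [← Real.exp_add, show (L1 + L2 + s) / 2 + -(x - (s + L2 - L1) / 2) = L2 + (s - x) by ring,
      Real.exp_add, Real.exp_log ha2]
  calc a1 * Real.exp x + a2 * Real.exp (s - x)
      = Real.exp ((L1 + L2 + s) / 2) * Real.exp (x - (s + L2 - L1) / 2)
        + Real.exp ((L1 + L2 + s) / 2) * Real.exp (-(x - (s + L2 - L1) / 2)) := by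
        rw [e1, e2]
    _ = 2 * Real.exp ((L1 + L2 + s) / 2) *
        ((Real.exp (x - (s + L2 - L1) / 2) + Real.exp (-(x - (s + L2 - L1) / 2))) / 2) := by
        ring

lemma pdf_factor {μ : ℝ} {v : NNReal} (hv : v ≠ 0) (x s : ℝ) :
    gaussianPDFReal μ v x * gaussianPDFReal μ v (s - x)
      = gaussianPDFReal (2*μ) (2*v) s * gaussianPDFReal (s/2) (v/2) x := by
  have hvpos : (0:ℝ) < v := by exact_mod_cast pos_iff_ne_zero.2 hv
  have hπ : (0:ℝ) < π := Real.pi_pos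
  unfold gaussianPDFReal
  push_cast
  have hconst : (Real.sqrt (2*π*v))⁻¹ * (Real.sqrt (2*π*v))⁻¹
      = (Real.sqrt (2*π*(2*v)))⁻¹ * (Real.sqrt (2*π*(v/2)))⁻¹ := by
    rw [← mul_inv, ← mul_inv, ← Real.sqrt_mul (by positivity), ← Real.sqrt_mul (by positivity)]
    congr 2
    ring
  have hexp : -(x - μ)^2 / (2*(v:ℝ)) + -(s - x - μ)^2 / (2*v)
      = -(s - 2*μ)^2 / (2*(2*v)) + -(x - s/2)^2 / (2*(v/2)) := by
    field_simp
    ring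
  calc (Real.sqrt (2*π*v))⁻¹ * Real.exp (-(x - μ)^2 / (2*v))
        * ((Real.sqrt (2*π*v))⁻¹ * Real.exp (-(s - x - μ)^2 / (2*v)))
      = ((Real.sqrt (2*π*v))⁻¹ * (Real.sqrt (2*π*v))⁻¹)
        * Real.exp (-(x - μ)^2 / (2*v) + -(s - x - μ)^2 / (2*v)) := by
        rw [Real.exp_add]; ring
    _ = ((Real.sqrt (2*π*(2*v)))⁻¹ * (Real.sqrt (2*π*(v/2)))⁻¹)
        * Real.exp (-(s - 2*μ)^2 / (2*(2*v)) + -(x - s/2)^2 / (2*(v/2))) := by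
        rw [hconst, hexp]
    _ = _ := by rw [Real.exp_add]; ring

lemma twoDim_repr {μ : ℝ} {v : NNReal} (hv : v ≠ 0) (a1 a2 : ℝ) (t : ℝ) :
    ((gaussianReal μ v).prod (gaussianReal μ v))
        {p : ℝ × ℝ | t < a1 * Real.exp p.1 + a2 * Real.exp p.2}
      = ∫⁻ s, gaussianPDF (2*μ) (2*v) s *
          gaussianReal (s/2) (v/2) {x | t < a1 * Real.exp x + a2 * Real.exp (s - x)} ∂volume := by
  have hvhalf : (v/2 : NNReal) ≠ 0 := by
    simp only [ne_eq, div_eq_zero_iff]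
    push_neg
    exact ⟨hv, by norm_num⟩
  set S : Set (ℝ × ℝ) := {p : ℝ × ℝ | t < a1 * Real.exp p.1 + a2 * Real.exp p.2} with hSdef
  have hS : MeasurableSet S := by
    have : S = (fun p : ℝ × ℝ => a1 * Real.exp p.1 + a2 * Real.exp p.2) ⁻¹' Ioi t := rfl
    rw [this]
    exact ((continuous_const.mul (Real.continuous_exp.comp continuous_fst)).add
      (continuous_const.mul (Real.continuous_exp.comp continuous_snd))).measurable
      measurableSet_Ioi
  set E : Set (ℝ × ℝ) := {q : ℝ × ℝ | t < a1 * Real.exp q.1 + a2 * Real.exp (q.2 - q.1)} with hEdef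
  have hE : MeasurableSet E := by
    have : E = (fun q : ℝ × ℝ => a1 * Real.exp q.1 + a2 * Real.exp (q.2 - q.1)) ⁻¹' Ioi t := rfl
    rw [this]
    exact ((continuous_const.mul (Real.continuous_exp.comp continuous_fst)).add
      (continuous_const.mul (Real.continuous_exp.comp
        (continuous_snd.sub continuous_fst)))).measurable measurableSet_Ioi
  have hCmeas : ∀ s : ℝ, MeasurableSet {x : ℝ | t < a1 * Real.exp x + a2 * Real.exp (s - x)} := by
    intro s
    have : {x : ℝ | t < a1 * Real.exp x + a2 * Real.exp (s - x)} =
        (fun x : ℝ => a1 * Real.exp x + a2 * Real.exp (s - x)) ⁻¹' Ioi t := rfl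
    rw [this]
    exact ((continuous_const.mul Real.continuous_exp).add
      (continuous_const.mul (Real.continuous_exp.comp
        (continuous_const.sub continuous_id)))).measurable measurableSet_Ioi
  have hgEmeas : Measurable (E.indicator (fun q : ℝ × ℝ => gaussianPDF μ v (q.2 - q.1))) :=
    ((measurable_gaussianPDF μ v).comp (measurable_snd.sub measurable_fst)).indicator hE
  -- step 2 : pointwise identity for sections
  have step2 : ∀ x : ℝ, gaussianReal μ v (Prod.mk x ⁻¹' S)
      = ∫⁻ s, E.indicator (fun q => gaussianPDF μ v (q.2 - q.1)) (x, s) ∂volume := by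
    intro x
    rw [gaussianReal_apply _ hv _]
    have hmp : MeasurePreserving (fun s : ℝ => s + (-x)) volume volume :=
      measurePreserving_add_right volume (-x)
    have hemb : MeasurableEmbedding (fun s : ℝ => s + (-x)) :=
      (Homeomorph.addRight (-x)).measurableEmbedding
    rw [← hmp.setLIntegral_comp_preimage_emb hemb (fun y => gaussianPDF μ v y) _]
    have hpre : (fun s : ℝ => s + (-x)) ⁻¹' (Prod.mk x ⁻¹' S)
        = Prod.mk x ⁻¹' E := by
      ext s
      simp only [mem_preimage, hSdef, hEdef, mem_setOf_eq, sub_eq_add_neg]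
    rw [hpre]
    have hrhs : ∫⁻ (s : ℝ), E.indicator (fun q => gaussianPDF μ v (q.2 - q.1)) (x, s) ∂volume
        = ∫⁻ (s : ℝ), (Prod.mk x ⁻¹' E).indicator (fun s => gaussianPDF μ v (s + (-x))) s
            ∂volume := by
      refine lintegral_congr fun s => ?_
      by_cases hs : (x, s) ∈ E
      · rw [Set.indicator_of_mem hs,
          Set.indicator_of_mem (show s ∈ Prod.mk x ⁻¹' E from hs)]
        simp [sub_eq_add_neg]
      · rw [Set.indicator_of_notMem hs,
          Set.indicator_of_notMem (show s ∉ Prod.mk x ⁻¹' E from hs)]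
    rw [hrhs, lintegral_indicator (hE.preimage measurable_prodMk_left)]
  -- measurability of the double integrand
  have hfmeas : Measurable (Function.uncurry fun x s =>
      gaussianPDF μ v x * E.indicator (fun q => gaussianPDF μ v (q.2 - q.1)) (x, s)) := by
    apply Measurable.mul
    · exact (measurable_gaussianPDF μ v).comp measurable_fst
    · exact hgEmeas
  calc ((gaussianReal μ v).prod (gaussianReal μ v)) S
      = ∫⁻ x, gaussianReal μ v (Prod.mk x ⁻¹' S) ∂(gaussianReal μ v) := by
        rw [Measure.prod_apply hS]
    _ = ∫⁻ x, gaussianPDF μ v x * gaussianReal μ v (Prod.mk x ⁻¹' S) ∂volume := by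
        rw [gaussianReal_of_var_ne_zero μ hv,
          lintegral_withDensity_eq_lintegral_mul volume (measurable_gaussianPDF μ v)
            (measurable_measure_prodMk_left hS)]
        rfl
    _ = ∫⁻ x, ∫⁻ s, gaussianPDF μ v x *
          E.indicator (fun q => gaussianPDF μ v (q.2 - q.1)) (x, s) ∂volume ∂volume := by
        congr 1
        funext x
        rw [step2 x, ← lintegral_const_mul _
          (show Measurable fun s : ℝ => E.indicator (fun q => gaussianPDF μ v (q.2 - q.1)) (x, s)
            from hgEmeas.comp measurable_prodMk_left)]
    _ = ∫⁻ s, ∫⁻ x, gaussianPDF μ v x *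
          E.indicator (fun q => gaussianPDF μ v (q.2 - q.1)) (x, s) ∂volume ∂volume := by
        exact lintegral_lintegral_swap hfmeas.aemeasurable
    _ = ∫⁻ s, gaussianPDF (2*μ) (2*v) s *
          gaussianReal (s/2) (v/2) {x | t < a1 * Real.exp x + a2 * Real.exp (s - x)} ∂volume := by
        congr 1
        funext s
        have hind : ∀ x : ℝ, gaussianPDF μ v x *
            E.indicator (fun q => gaussianPDF μ v (q.2 - q.1)) (x, s)
            = Set.indicator {x : ℝ | t < a1 * Real.exp x + a2 * Real.exp (s - x)}
                (fun x => gaussianPDF (2*μ) (2*v) s * gaussianPDF (s/2) (v/2) x) x := by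
          intro x
          by_cases hx : t < a1 * Real.exp x + a2 * Real.exp (s - x)
          · rw [Set.indicator_of_mem (by exact hx), Set.indicator_of_mem (by exact hx)]
            unfold gaussianPDF
            rw [← ENNReal.ofReal_mul (gaussianPDFReal_nonneg _ _ _),
              ← ENNReal.ofReal_mul (gaussianPDFReal_nonneg _ _ _)]
            congr 1
            exact pdf_factor hv x s
          · rw [Set.indicator_of_notMem (by exact hx), Set.indicator_of_notMem (by exact hx),
              mul_zero]
        rw [lintegral_congr hind]
        rw [lintegral_indicator (hCmeas s)]
        rw [lintegral_const_mul _ (measurable_gaussianPDF _ _)]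
        rw [← gaussianReal_apply _ hvhalf]

lemma twoDimCore {μ : ℝ} {v : NNReal} (hv : v ≠ 0) {a1 a2 b1 b2 : ℝ}
    (ha1 : 0 < a1) (ha2 : 0 < a2) (hb1 : 0 < b1) (hb2 : 0 < b2)
    (hprod : a1 * a2 = b1 * b2)
    (hgap : |Real.log a1 - Real.log a2| ≤ |Real.log b1 - Real.log b2|) (t : ℝ) :
    ((gaussianReal μ v).prod (gaussianReal μ v))
        {p : ℝ × ℝ | t < a1 * Real.exp p.1 + a2 * Real.exp p.2}
      ≤ ((gaussianReal μ v).prod (gaussianReal μ v))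
        {p : ℝ × ℝ | t < b1 * Real.exp p.1 + b2 * Real.exp p.2} := by
  have hvhalf : (v/2 : NNReal) ≠ 0 := by
    simp only [ne_eq, div_eq_zero_iff]
    push_neg
    exact ⟨hv, by norm_num⟩
  rw [twoDim_repr hv, twoDim_repr hv]
  refine lintegral_mono fun s => ?_
  refine mul_le_mul_right ?_ _
  have hK : 0 < 2 * Real.sqrt (a1 * a2 * Real.exp s) := by
    have : 0 < a1 * a2 * Real.exp s := by positivity
    positivity
  have hsetA : {x : ℝ | t < a1 * Real.exp x + a2 * Real.exp (s - x)}
      = {x : ℝ | t < (2 * Real.sqrt (a1 * a2 * Real.exp s)) *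
          Real.cosh (x - (s + Real.log a2 - Real.log a1)/2)} := by
    ext x; rw [mem_setOf_eq, mem_setOf_eq, cosh_decomp ha1 ha2]
  have hsetB : {x : ℝ | t < b1 * Real.exp x + b2 * Real.exp (s - x)}
      = {x : ℝ | t < (2 * Real.sqrt (a1 * a2 * Real.exp s)) *
          Real.cosh (x - (s + Real.log b2 - Real.log b1)/2)} := by
    ext x; rw [mem_setOf_eq, mem_setOf_eq, cosh_decomp hb1 hb2, hprod]
  rw [hsetA, hsetB]
  refine oneDimCore hvhalf hK ?_
  have e1 : (s + Real.log a2 - Real.log a1)/2 - s/2 = (Real.log a2 - Real.log a1)/2 := by ring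
  have e2 : (s + Real.log b2 - Real.log b1)/2 - s/2 = (Real.log b2 - Real.log b1)/2 := by ring
  rw [e1, e2, abs_div, abs_div]
  have h1 : |Real.log a2 - Real.log a1| = |Real.log a1 - Real.log a2| := abs_sub_comm _ _
  have h2 : |Real.log b2 - Real.log b1| = |Real.log b1 - Real.log b2| := abs_sub_comm _ _
  rw [h1, h2]
  exact div_le_div_of_nonneg_right hgap (by norm_num)

lemma pairStep {Ω : Type*} [MeasurableSpace Ω] (P : Measure Ω) [IsProbabilityMeasure P]
    {n : ℕ} (Y : Fin n → Ω → ℝ) (μ : ℝ) {v : NNReal} (hv : v ≠ 0)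
    (hY_meas : ∀ i, Measurable (Y i))
    (h_indep : iIndepFun Y P)
    (hY_law : ∀ i, P.map (Y i) = (gaussianReal μ v).map Real.exp)
    {i j : Fin n} (hij : i ≠ j) (c d : Fin n → ℝ)
    (hc : ∀ k, 0 < c k) (hd : ∀ k, 0 < d k)
    (hoff : ∀ k, k ≠ i → k ≠ j → c k = d k)
    (hprod : c i * c j = d i * d j)
    (hgap : |Real.log (c i) - Real.log (c j)| ≤ |Real.log (d i) - Real.log (d j)|)
    (t : ℝ) :
    P {ω | t < ∑ k, c k * Y k ω} ≤ P {ω | t < ∑ k, d k * Y k ω} := by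
  classical
  haveI hPMexp : IsProbabilityMeasure ((gaussianReal μ v).map Real.exp) :=
    Measure.isProbabilityMeasure_map Real.measurable_exp.aemeasurable
  set T : Finset (Fin n) := (Finset.univ.erase i).erase j with hT
  set R : Ω → ℝ := fun ω => ∑ k ∈ T, c k * Y k ω with hR
  have hRmeas : Measurable R := by
    apply Finset.measurable_sum
    intro k _
    exact (hY_meas k).const_mul (c k)
  set V : Ω → ℝ × ℝ := fun ω => (Y i ω, Y j ω) with hV
  have hVmeas : Measurable V := (hY_meas i).prodMk (hY_meas j)
  have hmemT : ∀ k, k ∈ T ↔ (k ≠ j ∧ k ≠ i) := by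
    intro k
    simp [hT, Finset.mem_erase]
  have hsplit : ∀ (e : Fin n → ℝ) (ω : Ω), ∑ k, e k * Y k ω
      = e i * Y i ω + e j * Y j ω + ∑ k ∈ T, e k * Y k ω := by
    intro e ω
    rw [hT, ← Finset.sum_erase_add Finset.univ _ (Finset.mem_univ i),
      ← Finset.sum_erase_add (Finset.univ.erase i) _
        (Finset.mem_erase.2 ⟨hij.symm, Finset.mem_univ j⟩)]
    ring
  -- independence of R and V
  have hdisj : Disjoint T ({i, j} : Finset (Fin n)) := by
    rw [Finset.disjoint_left]
    intro k hk hk2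
    rcases Finset.mem_insert.1 hk2 with h | h
    · exact ((hmemT k).1 hk).2 h
    · exact ((hmemT k).1 hk).1 (Finset.mem_singleton.1 h)
  have hfin := h_indep.indepFun_finset T ({i, j} : Finset (Fin n)) hdisj hY_meas
  have hiIJ : i ∈ ({i, j} : Finset (Fin n)) := Finset.mem_insert_self _ _
  have hjIJ : j ∈ ({i, j} : Finset (Fin n)) := Finset.mem_insert_of_mem (Finset.mem_singleton_self _)
  have hφL : Measurable (fun g : (↥T → ℝ) => ∑ k : ↥T, c k * g k) := by
    apply Finset.measurable_sum
    intro k _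
    exact (measurable_pi_apply k).const_mul _
  have hφR : Measurable (fun g : (↥({i, j} : Finset (Fin n)) → ℝ) =>
      (g ⟨i, hiIJ⟩, g ⟨j, hjIJ⟩)) :=
    (measurable_pi_apply _).prodMk (measurable_pi_apply _)
  have hIndep : IndepFun R V P := by
    have h1 := hfin.comp hφL hφR
    have e1 : ((fun g : (↥T → ℝ) => ∑ k : ↥T, c k * g k) ∘ (fun ω (k : ↥T) => Y k ω)) = R := by
      funext ω
      simp only [Function.comp_apply, hR]
      exact Finset.sum_coe_sort T (fun k => c k * Y k ω)
    have e2 : ((fun g : (↥({i, j} : Finset (Fin n)) → ℝ) => (g ⟨i, hiIJ⟩, g ⟨j, hjIJ⟩)) ∘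
        (fun ω (k : ↥({i, j} : Finset (Fin n))) => Y k ω)) = V := rfl
    rw [e1, e2] at h1
    exact h1
  -- laws
  have hVlaw : P.map V = ((gaussianReal μ v).map Real.exp).prod
      ((gaussianReal μ v).map Real.exp) := by
    rw [(indepFun_iff_map_prod_eq_prod_map_map (hY_meas i).aemeasurable
      (hY_meas j).aemeasurable).1 (h_indep.indepFun hij), hY_law i, hY_law j]
  have hjoint : P.map (fun ω => (R ω, V ω)) = (P.map R).prod (P.map V) :=
    (indepFun_iff_map_prod_eq_prod_map_map hRmeas.aemeasurable hVmeas.aemeasurable).1 hIndep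
  have hprodmap : ((gaussianReal μ v).map Real.exp).prod ((gaussianReal μ v).map Real.exp)
      = ((gaussianReal μ v).prod (gaussianReal μ v)).map (Prod.map Real.exp Real.exp) :=
    Measure.map_prod_map _ _ Real.measurable_exp Real.measurable_exp
  -- key representation
  have key : ∀ e : Fin n → ℝ, (∀ ω, ∑ k ∈ T, e k * Y k ω = R ω) →
      P {ω | t < ∑ k, e k * Y k ω}
      = ∫⁻ r, ((gaussianReal μ v).prod (gaussianReal μ v))
          {p : ℝ × ℝ | t - r < e i * Real.exp p.1 + e j * Real.exp p.2} ∂(P.map R) := by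
    intro e he
    have hU : MeasurableSet {q : ℝ × (ℝ × ℝ) | t < e i * q.2.1 + e j * q.2.2 + q.1} := by
      have : {q : ℝ × (ℝ × ℝ) | t < e i * q.2.1 + e j * q.2.2 + q.1}
          = (fun q : ℝ × (ℝ × ℝ) => e i * q.2.1 + e j * q.2.2 + q.1) ⁻¹' Ioi t := rfl
      rw [this]
      exact (((measurable_fst.comp measurable_snd).const_mul _ |>.add
        ((measurable_snd.comp measurable_snd).const_mul _)).add measurable_fst)
        measurableSet_Ioi
    have hev : {ω | t < ∑ k, e k * Y k ω}
        = (fun ω => (R ω, V ω)) ⁻¹' {q : ℝ × (ℝ × ℝ) | t < e i * q.2.1 + e j * q.2.2 + q.1} := by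
      ext ω
      simp only [mem_setOf_eq, mem_preimage, hV]
      rw [hsplit e ω, he ω]
    rw [hev, ← Measure.map_apply (hRmeas.prodMk hVmeas) hU, hjoint, hVlaw, hprodmap]
    rw [Measure.prod_apply hU]
    congr 1
    funext r
    rw [Measure.map_apply (Real.measurable_exp.prodMap Real.measurable_exp)
      (hU.preimage measurable_prodMk_left)]
    congr 1
    ext p
    simp only [mem_preimage, Prod.map_fst, Prod.map_snd, mem_setOf_eq]
    constructor <;> intro h <;> linarith
  rw [key c (fun ω => rfl), key d (fun ω => by
    refine Finset.sum_congr rfl fun k hk => ?_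
    rw [hoff k ((hmemT k).1 hk).2 ((hmemT k).1 hk).1])]
  refine lintegral_mono fun r => ?_
  exact twoDimCore hv (hc i) (hc j) (hd i) (hd j) hprod hgap (t - r)

/-- An elementary transfer between two coordinates: the pair-sum is preserved and the gap
does not increase. -/
def Step {n : ℕ} (β β' : Fin n → ℝ) : Prop :=
  ∃ i j, i ≠ j ∧ (∀ k, k ≠ i → k ≠ j → β' k = β k) ∧
    β' i + β' j = β i + β j ∧ |β' i - β' j| ≤ |β i - β j|

/-- Variational form of majorization. -/
def Inv {n : ℕ} (α β : Fin n → ℝ) : Prop :=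
  (∑ k, α k = ∑ k, β k) ∧
  ∀ s : Finset (Fin n), ∃ t : Finset (Fin n),
    t.card = s.card ∧ ∑ k ∈ s, α k ≤ ∑ k ∈ t, β k

lemma swap_chain {n : ℕ} (β : Fin n → ℝ) (p q : Fin n) :
    Relation.ReflTransGen Step β (β ∘ Equiv.swap p q) := by
  rcases eq_or_ne p q with h | h
  · subst h
    have : β ∘ (Equiv.swap p p) = β := by
      funext k; simp
    rw [this]
  · refine Relation.ReflTransGen.single ?_
    refine ⟨p, q, h, ?_, ?_, ?_⟩
    · intro k hk1 hk2
      simp [Equiv.swap_apply_of_ne_of_ne hk1 hk2]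
    · simp [Equiv.swap_apply_left, Equiv.swap_apply_right]; ring
    · simp [Equiv.swap_apply_left, Equiv.swap_apply_right, abs_sub_comm]

lemma inv_perm {n : ℕ} {α β : Fin n → ℝ} (h : Inv α β) (σ : Equiv.Perm (Fin n)) :
    Inv α (β ∘ σ) := by
  obtain ⟨hsum, hsub⟩ := h
  constructor
  · rw [hsum, ← Equiv.sum_comp σ β]
    rfl
  · intro s
    obtain ⟨t, hcard, hle⟩ := hsub s
    refine ⟨t.image σ.symm, ?_, ?_⟩
    · rw [Finset.card_image_of_injective _ σ.symm.injective, hcard]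
    · refine hle.trans (le_of_eq ?_)
      rw [Finset.sum_image (fun x _ y _ h => σ.symm.injective h)]
      refine Finset.sum_congr rfl fun k _ => ?_
      simp

lemma sum_split {n : ℕ} (f : Fin n → ℝ) {p q : Fin n} (hpq : p ≠ q) :
    ∑ k, f k = f p + f q + ∑ k ∈ (Finset.univ.erase p).erase q, f k := by
  rw [← Finset.sum_erase_add Finset.univ _ (Finset.mem_univ p),
    ← Finset.sum_erase_add (Finset.univ.erase p) _
      (Finset.mem_erase.2 ⟨hpq.symm, Finset.mem_univ q⟩)]
  ring

lemma sum_split_finset {n : ℕ} (f : Fin n → ℝ) {t : Finset (Fin n)} {p q : Fin n}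
    (hpq : p ≠ q) (hp : p ∈ t) (hq : q ∈ t) :
    ∑ k ∈ t, f k = f p + f q + ∑ k ∈ (t.erase p).erase q, f k := by
  rw [← Finset.sum_erase_add t _ hp,
    ← Finset.sum_erase_add (t.erase p) _ (Finset.mem_erase.2 ⟨hpq.symm, hq⟩)]
  ring

lemma inv_transfer {n : ℕ} {α β : Fin n → ℝ} (hInv : Inv α β) {p q : Fin n} (hpq : p ≠ q)
    {a : ℝ} (hmax : ∀ k, α k ≤ a) (hqa : β q ≤ a) (hap : a ≤ β p)
    (hqmax : ∀ k, k ≠ p → β k ≤ a → β k ≤ β q) :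
    Inv α (Function.update (Function.update β p a) q (β q + (β p - a))) := by
  classical
  set β' := Function.update (Function.update β p a) q (β q + (β p - a)) with hβ'
  have hb'p : β' p = a := by
    rw [hβ', Function.update_of_ne hpq, Function.update_self]
  have hb'q : β' q = β q + (β p - a) := by
    rw [hβ', Function.update_self]
  have hb'off : ∀ k, k ≠ p → k ≠ q → β' k = β k := by
    intro k hk1 hk2
    rw [hβ', Function.update_of_ne hk2, Function.update_of_ne hk1]
  have hpair : β' p + β' q = β p + β q := by
    rw [hb'p, hb'q]; ring
  have hmono : ∀ k, k ≠ p → β k ≤ β' k := by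
    intro k hk
    rcases eq_or_ne k q with h | h
    · subst h; rw [hb'q]; linarith
    · rw [hb'off k hk h]
  have hpairsum : ∀ u : Finset (Fin n), p ∈ u → q ∈ u →
      ∑ k ∈ u, β' k = ∑ k ∈ u, β k := by
    intro u hp hq
    rw [sum_split_finset β' hpq hp hq, sum_split_finset β hpq hp hq, hpair]
    congr 1
    refine Finset.sum_congr rfl fun k hk => ?_
    exact hb'off k (Finset.mem_erase.1 (Finset.mem_of_mem_erase hk)).1
      (Finset.mem_erase.1 hk).1
  constructor
  · rw [hInv.1]
    rw [sum_split β hpq, sum_split β' hpq, hpair]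
    congr 1
    refine Finset.sum_congr rfl fun k hk => ?_
    exact (hb'off k (Finset.mem_erase.1 (Finset.mem_of_mem_erase hk)).1
      (Finset.mem_erase.1 hk).1).symm
  · intro s
    obtain ⟨t, hcard, hle⟩ := hInv.2 s
    by_cases hp : p ∈ t
    · by_cases hq : q ∈ t
      · exact ⟨t, hcard, hle.trans (le_of_eq (hpairsum t hp hq).symm)⟩
      · by_cases hw : ∃ w ∈ t, w ≠ p ∧ β w ≤ a
        · obtain ⟨w, hwt, hwp, hwa⟩ := hw
          have hqw : q ∉ t.erase w := fun h => hq (Finset.mem_of_mem_erase h)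
          refine ⟨insert q (t.erase w), ?_, ?_⟩
          · rw [Finset.card_insert_of_notMem hqw, Finset.card_erase_of_mem hwt, hcard]
            have : 1 ≤ t.card := Finset.card_pos.2 ⟨p, hp⟩
            rw [hcard] at this
            omega
          · have hp' : p ∈ insert q (t.erase w) :=
              Finset.mem_insert_of_mem (Finset.mem_erase.2 ⟨fun h => hwp h.symm, hp⟩)
            have hq' : q ∈ insert q (t.erase w) := Finset.mem_insert_self _ _
            rw [hpairsum _ hp' hq']
            rw [Finset.sum_insert hqw, Finset.sum_erase_eq_sub hwt]
            have hwq : β w ≤ β q := hqmax w hwp hwa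
            linarith
        · push_neg at hw
          refine ⟨t, hcard, ?_⟩
          have h1 : ∑ k ∈ s, α k ≤ s.card • a :=
            Finset.sum_le_card_nsmul s α a (fun x _ => hmax x)
          have h2 : t.card • a ≤ ∑ k ∈ t, β' k := by
            refine Finset.card_nsmul_le_sum t β' a (fun k hk => ?_)
            rcases eq_or_ne k p with h | h
            · subst h; rw [hb'p]
            · have hkq : k ≠ q := fun hh => hq (hh ▸ hk)
              rw [hb'off k h hkq]
              exact (hw k hk h).le
          rw [hcard] at h2
          exact h1.trans h2
    · refine ⟨t, hcard, hle.trans (Finset.sum_le_sum fun k hk => ?_)⟩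
      exact hmono k (fun h => hp (h ▸ hk))

lemma finset_pullback {n : ℕ} (iM : Fin (n+1)) (t : Finset (Fin (n+1))) (h : iM ∉ t) :
    ∃ t₀ : Finset (Fin n), t₀.map (Fin.succAboveEmb iM) = t := by
  classical
  refine ⟨Finset.univ.filter (fun l => iM.succAbove l ∈ t), ?_⟩
  ext k
  simp only [Finset.mem_map, Finset.mem_filter, Finset.mem_univ, true_and,
    Fin.succAboveEmb, Function.Embedding.coeFn_mk]
  constructor
  · rintro ⟨l, hl, rfl⟩
    exact hl
  · intro hk
    have hkiM : k ≠ iM := fun hh => h (hh ▸ hk)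
    obtain ⟨l, hl⟩ := Fin.exists_succAbove_eq hkiM
    exact ⟨l, hl ▸ hk, hl⟩

lemma inv_removeNth {n : ℕ} {α β : Fin (n+1) → ℝ} (hInv : Inv α β) (iM : Fin (n+1))
    (hmax : ∀ k, α k ≤ α iM) (heq : β iM = α iM) :
    Inv (iM.removeNth α) (iM.removeNth β) := by
  classical
  set a := α iM with ha
  constructor
  · have h1 := Fin.sum_univ_succAbove α iM
    have h2 := Fin.sum_univ_succAbove β iM
    have h3 := hInv.1
    rw [h1, h2, heq] at h3
    unfold Fin.removeNth
    linarith
  · intro s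
    have hiMnotmem : iM ∉ s.map (Fin.succAboveEmb iM) := by
      simp only [Finset.mem_map, Fin.succAboveEmb, Function.Embedding.coeFn_mk]
      rintro ⟨l, _, hl⟩
      exact Fin.succAbove_ne iM l hl
    have hcard1 : (insert iM (s.map (Fin.succAboveEmb iM))).card = s.card + 1 := by
      rw [Finset.card_insert_of_notMem hiMnotmem, Finset.card_map]
    obtain ⟨t, hcardt, hle⟩ := hInv.2 (insert iM (s.map (Fin.succAboveEmb iM)))
    rw [hcard1] at hcardt
    have hsum1 : ∑ k ∈ insert iM (s.map (Fin.succAboveEmb iM)), α k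
        = a + ∑ l ∈ s, (iM.removeNth α) l := by
      rw [Finset.sum_insert hiMnotmem, Finset.sum_map]
      rfl
    rw [hsum1] at hle
    -- find t' with iM ∉ t', t'.card = s.card, and the sum bound
    have main : ∃ t' : Finset (Fin (n+1)), iM ∉ t' ∧ t'.card = s.card ∧
        a + ∑ l ∈ s, (iM.removeNth α) l ≤ a + ∑ k ∈ t', β k := by
      by_cases hiMt : iM ∈ t
      · refine ⟨t.erase iM, Finset.notMem_erase _ _, ?_, ?_⟩
        · rw [Finset.card_erase_of_mem hiMt, hcardt]; omega
        · rw [Finset.sum_erase_eq_sub hiMt, heq] at *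
          linarith
      · have htne : t.Nonempty := Finset.card_pos.1 (by omega)
        by_cases hw : ∃ w ∈ t, β w ≤ a
        · obtain ⟨w, hwt, hwa⟩ := hw
          refine ⟨t.erase w, fun hh => hiMt (Finset.mem_of_mem_erase hh), ?_, ?_⟩
          · rw [Finset.card_erase_of_mem hwt, hcardt]; omega
          · rw [Finset.sum_erase_eq_sub hwt]
            linarith
        · push_neg at hw
          obtain ⟨w, hwt⟩ := htne
          refine ⟨t.erase w, fun hh => hiMt (Finset.mem_of_mem_erase hh), ?_, ?_⟩
          · rw [Finset.card_erase_of_mem hwt, hcardt]; omega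
          · have h1 : ∑ l ∈ s, (iM.removeNth α) l ≤ s.card • a :=
              Finset.sum_le_card_nsmul s _ a (fun x _ => hmax _)
            have h2 : (t.erase w).card • a ≤ ∑ k ∈ t.erase w, β k :=
              Finset.card_nsmul_le_sum _ β a
                (fun k hk => (hw k (Finset.mem_of_mem_erase hk)).le)
            rw [Finset.card_erase_of_mem hwt, hcardt] at h2
            simp only [Nat.add_sub_cancel] at h2
            linarith
    obtain ⟨t', hiMt', hcard', hle'⟩ := main
    obtain ⟨t₀, ht₀⟩ := finset_pullback iM t' hiMt'
    refine ⟨t₀, ?_, ?_⟩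
    · rw [← ht₀, Finset.card_map] at hcard'
      exact hcard'
    · have : ∑ k ∈ t', β k = ∑ l ∈ t₀, (iM.removeNth β) l := by
        rw [← ht₀, Finset.sum_map]
        rfl
      rw [this] at hle'
      linarith

lemma step_insertNth {n : ℕ} (iM : Fin (n+1)) (x : ℝ) {γ γ' : Fin n → ℝ} (h : Step γ γ') :
    Step (iM.insertNth x γ) (iM.insertNth x γ') := by
  obtain ⟨i, j, hij, hoff, hsum, hgap⟩ := h
  refine ⟨iM.succAbove i, iM.succAbove j,
    fun hh => hij (Fin.succAbove_right_injective hh), ?_, ?_, ?_⟩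
  · intro k hk1 hk2
    rcases eq_or_ne k iM with h | h
    · subst h; rw [Fin.insertNth_apply_same, Fin.insertNth_apply_same]
    · obtain ⟨l, rfl⟩ := Fin.exists_succAbove_eq h
      rw [Fin.insertNth_apply_succAbove, Fin.insertNth_apply_succAbove]
      exact hoff l (fun hh => hk1 (by rw [hh])) (fun hh => hk2 (by rw [hh]))
  · rw [Fin.insertNth_apply_succAbove, Fin.insertNth_apply_succAbove,
      Fin.insertNth_apply_succAbove, Fin.insertNth_apply_succAbove]
    exact hsum
  · rw [Fin.insertNth_apply_succAbove, Fin.insertNth_apply_succAbove,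
      Fin.insertNth_apply_succAbove, Fin.insertNth_apply_succAbove]
    exact hgap

theorem chain_of_inv : ∀ {n : ℕ} (α β : Fin n → ℝ), Inv α β →
    Relation.ReflTransGen Step β α := by
  intro n
  induction n with
  | zero =>
    intro α β _
    have : β = α := funext fun k => k.elim0
    rw [this]
  | succ n ih =>
    intro α β hInv
    classical
    obtain ⟨iM, hiM⟩ := Finite.exists_max α
    obtain ⟨p, hp⟩ := Finite.exists_max β
    set a := α iM with ha
    have hpa : a ≤ β p := by
      obtain ⟨t, hcard, hle⟩ := hInv.2 {iM}
      rw [Finset.card_singleton] at hcard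
      obtain ⟨w, rfl⟩ := Finset.card_eq_one.1 hcard
      rw [Finset.sum_singleton, Finset.sum_singleton] at hle
      exact hle.trans (hp w)
    rcases Nat.eq_zero_or_pos n with hn | hn
    · subst hn
      have : β = α := by
        funext k
        have hsum := hInv.1
        rw [Fin.sum_univ_one, Fin.sum_univ_one] at hsum
        rw [show k = 0 from Fin.fin_one_eq_zero k, hsum]
      rw [this]
    · -- there is a candidate below a
      have hcand : ∃ q, q ≠ p ∧ β q ≤ a := by
        by_contra hcon
        push_neg at hcon
        have hlt : ∑ k, α k < ∑ k, β k := by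
          obtain ⟨k0, _, hk0⟩ := Finset.exists_mem_ne
            (by rw [Finset.card_univ, Fintype.card_fin]; omega) p
          refine Finset.sum_lt_sum (fun k _ => ?_) ⟨k0, Finset.mem_univ k0, ?_⟩
          · rcases eq_or_ne k p with h | h
            · subst h; exact (hiM k).trans hpa
            · exact (hiM k).trans (hcon k h).le
          · exact lt_of_le_of_lt (hiM k0) (hcon k0 hk0)
        exact absurd hInv.1 (ne_of_lt hlt)
      set C := Finset.univ.filter (fun k => k ≠ p ∧ β k ≤ a) with hC
      have hCne : C.Nonempty := by
        obtain ⟨q, hq1, hq2⟩ := hcand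
        exact ⟨q, Finset.mem_filter.2 ⟨Finset.mem_univ q, hq1, hq2⟩⟩
      obtain ⟨q, hqC, hqmax'⟩ := Finset.exists_max_image C β hCne
      have hqp : q ≠ p := (Finset.mem_filter.1 hqC).2.1
      have hqa : β q ≤ a := (Finset.mem_filter.1 hqC).2.2
      have hqmax : ∀ k, k ≠ p → β k ≤ a → β k ≤ β q := fun k h1 h2 =>
        hqmax' k (Finset.mem_filter.2 ⟨Finset.mem_univ k, h1, h2⟩)
      set β' := Function.update (Function.update β p a) q (β q + (β p - a)) with hβ'
      have hb'p : β' p = a := by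
        rw [hβ', Function.update_of_ne hqp.symm, Function.update_self]
      have hb'q : β' q = β q + (β p - a) := by rw [hβ', Function.update_self]
      have hstep : Step β β' := by
        refine ⟨p, q, hqp.symm, ?_, ?_, ?_⟩
        · intro k hk1 hk2
          rw [hβ', Function.update_of_ne hk2, Function.update_of_ne hk1]
        · rw [hb'p, hb'q]; ring
        · rw [hb'p, hb'q, abs_of_nonneg (sub_nonneg.2 (hqa.trans hpa))]
          rw [abs_le]
          constructor <;> [skip; skip] <;> linarith
      have hInv' : Inv α β' := inv_transfer hInv hqp.symm hiM hqa hpa hqmax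
      set σ := Equiv.swap p iM with hσ
      set β'' := β' ∘ σ with hβ''
      have hchain2 : Relation.ReflTransGen Step β' β'' := swap_chain β' p iM
      have hInv'' : Inv α β'' := inv_perm hInv' σ
      have hβ''iM : β'' iM = a := by
        rw [hβ'']
        simp only [Function.comp_apply, hσ, Equiv.swap_apply_right]
        exact hb'p
      have hInv0 : Inv (iM.removeNth α) (iM.removeNth β'') :=
        inv_removeNth hInv'' iM hiM (by rw [hβ''iM])
      have hchain0 := ih _ _ hInv0
      have hlift : Relation.ReflTransGen Step (iM.insertNth a (iM.removeNth β''))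
          (iM.insertNth a (iM.removeNth α)) :=
        Relation.ReflTransGen.lift (p := Step) (fun γ : Fin n → ℝ => (iM.insertNth a γ : Fin (n+1) → ℝ)) (fun x y (h : Step x y) => step_insertNth iM a h) _ _ hchain0
      have e1 : iM.insertNth a (iM.removeNth β'') = β'' := by
        rw [show a = β'' iM from hβ''iM.symm]
        exact Fin.insertNth_self_removeNth iM β''
      have e2 : iM.insertNth a (iM.removeNth α) = α := Fin.insertNth_self_removeNth iM α
      rw [e1, e2] at hlift
      exact ((Relation.ReflTransGen.single hstep).trans hchain2).trans hlift

lemma sum_le_sum_of_dominating {n : ℕ} {α : Fin n → ℝ} {s s' : Finset (Fin n)}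
    (hcard : s.card = s'.card) (hdom : ∀ x ∈ s', ∀ y, y ∉ s' → α y ≤ α x) :
    ∑ k ∈ s, α k ≤ ∑ k ∈ s', α k := by
  classical
  have h1 : ∑ k ∈ s ∩ s', α k + ∑ k ∈ s \ s', α k = ∑ k ∈ s, α k :=
    Finset.sum_inter_add_sum_sdiff s s' α
  have h2 : ∑ k ∈ s' ∩ s, α k + ∑ k ∈ s' \ s, α k = ∑ k ∈ s', α k :=
    Finset.sum_inter_add_sum_sdiff s' s α
  have hint : ∑ k ∈ s ∩ s', α k = ∑ k ∈ s' ∩ s, α k := by rw [Finset.inter_comm]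
  have hcards : (s \ s').card = (s' \ s).card := by
    have c1 := Finset.card_sdiff_add_card_inter s s'
    have c2 := Finset.card_sdiff_add_card_inter s' s
    rw [Finset.inter_comm] at c2
    omega
  have hdiff : ∑ k ∈ s \ s', α k ≤ ∑ k ∈ s' \ s, α k := by
    rcases Finset.eq_empty_or_nonempty (s' \ s) with he | hne
    · rw [he] at hcards
      simp only [Finset.card_empty] at hcards
      rw [Finset.card_eq_zero.1 hcards, he]
    · obtain ⟨x₀, hx₀, hx₀min⟩ := Finset.exists_min_image (s' \ s) α hne
      have hx₀s' : x₀ ∈ s' := (Finset.mem_sdiff.1 hx₀).1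
      calc ∑ k ∈ s \ s', α k ≤ (s \ s').card • α x₀ :=
            Finset.sum_le_card_nsmul _ _ _
              (fun y hy => hdom x₀ hx₀s' y (Finset.mem_sdiff.1 hy).2)
        _ = (s' \ s).card • α x₀ := by rw [hcards]
        _ ≤ ∑ k ∈ s' \ s, α k :=
            Finset.card_nsmul_le_sum _ _ _ (fun z hz => hx₀min z hz)
  linarith

lemma inv_of_majorized {n : ℕ} (α β : Fin n → ℝ) (h : IsMajorizedBy α β) : Inv α β := by
  classical
  refine ⟨h.1, fun s => ?_⟩
  rcases Nat.eq_zero_or_pos s.card with h0 | h0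
  · refine ⟨∅, by simp [h0], ?_⟩
    rw [Finset.card_eq_zero.1 h0]
    simp
  · have hm_le : s.card ≤ n := by
      have := Finset.card_le_univ s
      rwa [Fintype.card_fin] at this
    have hnpos : 0 < n := lt_of_lt_of_le h0 hm_le
    set k₀ : Fin n := ⟨n - s.card, by omega⟩ with hk₀
    have hIci : (Finset.Ici k₀).card = s.card := by
      rw [Fin.card_Ici]
      simp only [hk₀]
      omega
    have h2 := h.2 k₀
    refine ⟨(Finset.Ici k₀).image (Tuple.sort β), ?_, ?_⟩
    · rw [Finset.card_image_of_injective _ (Equiv.injective _), hIci]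
    · rw [Finset.sum_image (fun x _ y _ hxy => (Tuple.sort β).injective hxy)]
      refine le_trans ?_ h2
      have himg : ∑ i ∈ Finset.Ici k₀, α (Tuple.sort α i)
          = ∑ k ∈ (Finset.Ici k₀).image (Tuple.sort α), α k :=
        (Finset.sum_image (fun x _ y _ hxy => (Tuple.sort α).injective hxy)).symm
      rw [himg]
      refine sum_le_sum_of_dominating ?_ ?_
      · rw [Finset.card_image_of_injective _ (Equiv.injective _), hIci]
      · intro x hx y hy
        obtain ⟨i, hi, rfl⟩ := Finset.mem_image.1 hx
        set l := (Tuple.sort α).symm y with hl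
        have hly : Tuple.sort α l = y := Equiv.apply_symm_apply _ _
        have hlnot : l ∉ Finset.Ici k₀ := by
          intro hmem
          exact hy (Finset.mem_image.2 ⟨l, hmem, hly⟩)
        have hlk : l ≤ i := by
          rw [Finset.mem_Ici] at hlnot hi
          have : l < k₀ := lt_of_not_ge hlnot
          exact le_of_lt (lt_of_lt_of_le this hi)
        have := Tuple.monotone_sort α hlk
        simpa [Function.comp, hly] using this

end LogNormalSt

theorem lognormal_weighted_sums_st_order
    {Ω : Type*} [MeasurableSpace Ω] (P : Measure Ω) [IsProbabilityMeasure P]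
    (n : ℕ) (Y Z : Fin n → Ω → ℝ) (μ : ℝ) (v : NNReal) (hv : 0 < v)
    (hY_meas : ∀ i, Measurable (Y i))
    (h_indep : iIndepFun Y P)
    (hYZ : ∀ i, ∀ ω, Y i ω = Real.exp (Z i ω))
    (hZ_law : ∀ i, P.map (Z i) = gaussianReal μ v)
    (a b : Fin n → ℝ) (ha : ∀ i, 0 < a i) (hb : ∀ i, 0 < b i)
    (hmaj : IsMajorizedBy (fun i => Real.log (a i)) (fun i => Real.log (b i))) :
    ∀ t : ℝ, P {ω | t < ∑ i, a i * Y i ω} ≤ P {ω | t < ∑ i, b i * Y i ω} := by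
  intro t
  have hvne : v ≠ 0 := hv.ne'
  have hZmeas : ∀ i, Measurable (Z i) := by
    intro i
    have : Z i = fun ω => Real.log (Y i ω) := by
      funext ω; rw [hYZ i ω, Real.log_exp]
    rw [this]
    exact Real.measurable_log.comp (hY_meas i)
  have hYlaw : ∀ i, P.map (Y i) = (gaussianReal μ v).map Real.exp := by
    intro i
    have hYc : Y i = Real.exp ∘ Z i := funext (hYZ i)
    rw [hYc, ← Measure.map_map Real.measurable_exp (hZmeas i), hZ_law i]
  have hInv := LogNormalSt.inv_of_majorized _ _ hmaj
  have hchain := LogNormalSt.chain_of_inv _ _ hInv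
  have hstepmono : ∀ γ δ : Fin n → ℝ, LogNormalSt.Step γ δ →
      P {ω | t < ∑ k, Real.exp (δ k) * Y k ω} ≤ P {ω | t < ∑ k, Real.exp (γ k) * Y k ω} := by
    intro γ δ hs
    obtain ⟨i, j, hij, hoff, hsum, hgap⟩ := hs
    refine LogNormalSt.pairStep P Y μ hvne hY_meas h_indep hYlaw hij
      (fun k => Real.exp (δ k)) (fun k => Real.exp (γ k))
      (fun k => Real.exp_pos _) (fun k => Real.exp_pos _) ?_ ?_ ?_ t
    · intro k h1 h2; exact congrArg Real.exp (hoff k h1 h2)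
    · show Real.exp (δ i) * Real.exp (δ j) = Real.exp (γ i) * Real.exp (γ j)
      rw [← Real.exp_add, ← Real.exp_add, hsum]
    · show |Real.log (Real.exp (δ i)) - Real.log (Real.exp (δ j))|
          ≤ |Real.log (Real.exp (γ i)) - Real.log (Real.exp (γ j))|
      rw [Real.log_exp, Real.log_exp, Real.log_exp, Real.log_exp]; exact hgap
  have main : ∀ γ δ : Fin n → ℝ, Relation.ReflTransGen LogNormalSt.Step γ δ →
      P {ω | t < ∑ k, Real.exp (δ k) * Y k ω} ≤ P {ω | t < ∑ k, Real.exp (γ k) * Y k ω} := by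
    intro γ δ h
    induction h with
    | refl => exact le_rfl
    | tail _ hcd ih => exact le_trans (hstepmono _ _ hcd) ih
  have hfin := main (fun k => Real.log (b k)) (fun k => Real.log (a k)) hchain
  have hsa : {ω | t < ∑ k, Real.exp (Real.log (a k)) * Y k ω}
      = {ω | t < ∑ i, a i * Y i ω} := by
    ext ω
    simp only [mem_setOf_eq]
    rw [Finset.sum_congr rfl (fun k _ => by rw [Real.exp_log (ha k)])]
  have hsb : {ω | t < ∑ k, Real.exp (Real.log (b k)) * Y k ω}
      = {ω | t < ∑ i, b i * Y i ω} := by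
    ext ω
    simp only [mem_setOf_eq]
    rw [Finset.sum_congr rfl (fun k _ => by rw [Real.exp_log (hb k)])]
  rw [hsa, hsb] at hfin
  exact hfin
end

section
/- Fix p > 1, q with 1/p + 1/q = 1, t > 0, and β ∈ [1/2, 1). Set y_0 = t(1−β)^{1/p}, y_1 = t(1−β)^{−1/q}, and x(y) = (β^{−1} − 1)^{1/q}(y_1 − y). For y ∈ (0, y_0), let ỹ ∈ (y_0, y_1) be the unique point with y^p + x(y)^p = ỹ^p + x(ỹ)^p. Then β·ỹ ≥ (1−β)(y_1 − y) and β·y ≤ (1−β)(y_1 − ỹ). -/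
open Real Set

lemma conv_key {p : ℝ} (hp : 1 < p) {a b u : ℝ} (ha : 0 ≤ a) (hb : 0 ≤ b) (hu : 1 ≤ u) :
    (a + (u - 1) * b) ^ p ≤ u ^ (p - 1) * a ^ p + (u - 1) * u ^ (p - 1) * b ^ p := by
  rcases eq_or_lt_of_le hu with h | h
  · rw [← h]; simp
  · have hu0 : 0 < u := by linarith
    have hw1 : (0:ℝ) ≤ 1/u := by positivity
    have hw2 : (0:ℝ) ≤ (u-1)/u := div_nonneg (by linarith) hu0.le
    have hw : 1/u + (u-1)/u = 1 := by field_simp; ring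
    have hcv := (convexOn_rpow hp.le).2 (mem_Ici.2 (by positivity : (0:ℝ) ≤ u * a))
      (mem_Ici.2 (by positivity : (0:ℝ) ≤ u * b)) hw1 hw2 hw
    simp only [smul_eq_mul] at hcv
    have harg : 1/u * (u*a) + (u-1)/u * (u*b) = a + (u-1)*b := by field_simp
    rw [harg] at hcv
    have hup : u ^ p = u * u ^ (p - 1) := by
      rw [← Real.rpow_one_add' (by positivity) (by intro hc; linarith)]
      ring_nf
    have hma : (u * a) ^ p = u ^ p * a ^ p := Real.mul_rpow hu0.le ha
    have hmb : (u * b) ^ p = u ^ p * b ^ p := Real.mul_rpow hu0.le hb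
    rw [hma, hmb, hup] at hcv
    calc (a + (u-1)*b) ^ p ≤ 1/u * (u * u^(p-1) * a^p) + (u-1)/u * (u * u^(p-1) * b^p) := hcv
      _ = u ^ (p - 1) * a ^ p + (u - 1) * u ^ (p - 1) * b ^ p := by field_simp

theorem claim3_inequalities
    (p q t β : ℝ) (hp : 1 < p) (hpq : 1 / p + 1 / q = 1) (ht : 0 < t)
    (hβ : β ∈ Set.Ico (1 / 2 : ℝ) 1)
    (y₀ y₁ : ℝ) (hy₀ : y₀ = t * (1 - β) ^ (1 / p)) (hy₁ : y₁ = t * (1 - β) ^ (-(1 / q)))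
    (x : ℝ → ℝ) (hx : ∀ z, x z = (β⁻¹ - 1) ^ (1 / q) * (y₁ - z))
    (y ty : ℝ) (hy : y ∈ Set.Ioo (0 : ℝ) y₀) (hty : ty ∈ Set.Ioo y₀ y₁)
    (heq : y ^ p + x y ^ p = ty ^ p + x ty ^ p) :
    (1 - β) * (y₁ - y) ≤ β * ty ∧ β * y ≤ (1 - β) * (y₁ - ty) := by
  obtain ⟨hβh, hβ1⟩ := hβ
  obtain ⟨hy_pos, hy_lt⟩ := hy
  obtain ⟨hty_l, hty_u⟩ := hty
  have hβ0 : 0 < β := by linarith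
  have h1β : 0 < 1 - β := by linarith
  have hp0 : 0 < p := by linarith
  have hp1 : 0 < p - 1 := by linarith
  have hq : 1 / q = 1 - 1 / p := by linarith
  set r : ℝ := β / (1 - β) with hr_def
  have hr0 : 0 < r := div_pos hβ0 h1β
  have hr1 : 1 ≤ r := (one_le_div h1β).2 (by linarith)
  -- structural identities
  have hkey : (1 - β) * y₁ = y₀ := by
    rw [hy₀, hy₁, show (1-β) * (t * (1-β) ^ (-(1/q))) = t * ((1-β) ^ (1:ℝ) * (1-β) ^ (-(1/q)))
      by rw [Real.rpow_one]; ring, ← Real.rpow_add h1β]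
    congr 1
    rw [hq]; ring
  have hy₀pos : 0 < y₀ := by rw [hy₀]; positivity
  have h1r : (1 + r) * (1 - β) = 1 := by rw [hr_def]; field_simp; ring
  have hy10 : y₁ = (1 + r) * y₀ := by rw [← hkey, ← mul_assoc, h1r, one_mul]
  have hy₁pos : 0 < y₁ := by nlinarith
  -- R
  set R : ℝ := r ^ (p - 1) with hR_def
  have hR0 : 0 < R := Real.rpow_pos_of_pos hr0 _
  have hrp : r ^ p = r * R := by
    rw [hR_def, ← Real.rpow_one_add' hr0.le (by intro hc; linarith)]
    ring_nf
  -- x z ^ p = R⁻¹ * (y₁ - z)^p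
  have hcinv : β⁻¹ - 1 = r⁻¹ := by rw [hr_def]; field_simp
  have hqp : 1 / q * p = p - 1 := by rw [hq]; field_simp
  have hcp : ∀ z, z ≤ y₁ → x z ^ p = R⁻¹ * (y₁ - z) ^ p := by
    intro z hz
    rw [hx, Real.mul_rpow (Real.rpow_nonneg (by rw [hcinv]; positivity) _) (by linarith),
      hcinv]
    congr 1
    rw [← Real.rpow_mul (by positivity : (0:ℝ) ≤ r⁻¹), hqp, Real.inv_rpow hr0.le]
  -- the L-function
  have hRne : R ≠ 0 := hR0.ne'
  have hrne : r ≠ 0 := hr0.ne'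
  set L : ℝ → ℝ := fun z => z ^ p + R⁻¹ * (y₁ - z) ^ p with hL_def
  have hLeq : L y = L ty := by
    simp only [hL_def]
    rw [← hcp y (by linarith), ← hcp ty (by linarith)]
    exact heq
  -- the comparison points
  set s₁ : ℝ := (y₁ - y) / r with hs₁_def
  set s₂ : ℝ := y₁ - r * y with hs₂_def
  have hs₁l : y₀ < s₁ := by
    rw [hs₁_def, lt_div_iff₀ hr0]
    linarith [mul_lt_mul_of_pos_left hy_lt hr0, hy10]
  have hs₁u : s₁ ≤ y₁ := by
    rw [hs₁_def, div_le_iff₀ hr0]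
    linarith [mul_le_mul_of_nonneg_left hr1 hy₁pos.le]
  have hs₂l : y₀ < s₂ := by
    rw [hs₂_def]
    linarith [mul_lt_mul_of_pos_left hy_lt hr0, hy10]
  have hs₂u : s₂ ≤ y₁ := by
    rw [hs₂_def]
    linarith [mul_pos hr0 hy_pos]
  have hs₂0 : (0:ℝ) ≤ y₁ - r * y := by
    rw [hs₂_def] at hs₂l; linarith
  have hynn : (0:ℝ) ≤ y₁ - y := by linarith
  -- convexity inequality 1 : a = y₁ - r*y, b = y, u = r
  have h1 : (y₁ - y) ^ p ≤ R * (y₁ - r*y) ^ p + (r - 1) * R * y ^ p := by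
    have h := conv_key hp hs₂0 hy_pos.le hr1
    rw [show (y₁ - r*y) + (r - 1) * y = y₁ - y by ring] at h
    rw [hR_def]; exact h
  -- convexity inequality 2 : a = r*y, b = y₁ - y, u = r
  have h2 : ((r - 1) * y₁ + y) ^ p ≤ r * R^2 * y ^ p + (r - 1) * R * (y₁ - y) ^ p := by
    have h := conv_key hp (by positivity : (0:ℝ) ≤ r * y) hynn hr1
    rw [show (r*y) + (r - 1) * (y₁ - y) = (r - 1) * y₁ + y by ring,
      Real.mul_rpow hr0.le hy_pos.le, hrp] at h
    calc ((r - 1) * y₁ + y) ^ p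
        ≤ r ^ (p-1) * (r * R * y ^ p) + (r - 1) * r ^ (p-1) * (y₁ - y) ^ p := h
      _ = r * R^2 * y ^ p + (r - 1) * R * (y₁ - y) ^ p := by rw [← hR_def]; ring
  -- L y ≤ L s₂
  have hLys₂ : L y ≤ L s₂ := by
    simp only [hL_def, hs₂_def]
    rw [show y₁ - (y₁ - r * y) = r * y by ring, Real.mul_rpow hr0.le hy_pos.le, hrp,
      show R⁻¹ * (r * R * y ^ p) = r * y ^ p by field_simp]
    have h1' : R⁻¹ * (y₁ - y) ^ p ≤ (y₁ - r*y) ^ p + (r - 1) * y ^ p := by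
      rw [inv_mul_le_iff₀ hR0]; linarith [h1]
    linarith [h1']
  -- L s₁ ≤ L y
  have hLs₁y : L s₁ ≤ L y := by
    have hznn : (0:ℝ) ≤ (r-1)*y₁ + y := by
      linarith [mul_nonneg (sub_nonneg.2 hr1) hy₁pos.le]
    have e1 : s₁ ^ p = (y₁ - y)^p / (r*R) := by
      rw [hs₁_def, Real.div_rpow hynn hr0.le, hrp]
    have e2 : y₁ - s₁ = ((r-1)*y₁ + y)/r := by
      rw [hs₁_def]; field_simp; ring
    have e3 : (y₁ - s₁) ^ p = ((r-1)*y₁+y)^p/(r*R) := by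
      rw [e2, Real.div_rpow hznn hr0.le, hrp]
    have hG : R*(y₁-y)^p + ((r-1)*y₁+y)^p ≤ r*R^2*y^p + r*R*(y₁-y)^p := by
      linarith [h2]
    simp only [hL_def]
    rw [e1, e3]
    calc (y₁-y)^p/(r*R) + R⁻¹*(((r-1)*y₁+y)^p/(r*R))
        = (R*(y₁-y)^p + ((r-1)*y₁+y)^p)/(r*R^2) := by field_simp
      _ ≤ (r*R^2*y^p + r*R*(y₁-y)^p)/(r*R^2) := by gcongr
      _ = y^p + R⁻¹*(y₁-y)^p := by field_simp
  -- strict monotonicity of L on [y₀, y₁]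
  have hder : ∀ z : ℝ, HasDerivAt L
      (p * z^(p-1) + R⁻¹ * (-1 * p * (y₁ - z)^(p-1))) z := by
    intro z
    have hd1 : HasDerivAt (fun w : ℝ => w ^ p) (p * z^(p-1)) z :=
      Real.hasDerivAt_rpow_const (Or.inr hp.le)
    have hd2 : HasDerivAt (fun w : ℝ => y₁ - w) (-1) z := by
      simpa using (hasDerivAt_id z).const_sub y₁
    have hd3 : HasDerivAt (fun w : ℝ => (y₁ - w) ^ p) (-1 * p * (y₁ - z)^(p-1)) z :=
      hd2.rpow_const (Or.inr hp.le)
    exact hd1.add (hd3.const_mul R⁻¹)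
  have hmono : StrictMonoOn L (Icc y₀ y₁) := by
    apply strictMonoOn_of_deriv_pos (convex_Icc _ _)
    · exact (continuous_iff_continuousAt.2 fun z => (hder z).continuousAt).continuousOn
    · intro z hz
      rw [interior_Icc] at hz
      rw [(hder z).deriv]
      have hz0 : 0 < z := lt_trans hy₀pos hz.1
      have hzy : (0:ℝ) ≤ y₁ - z := by linarith [hz.2]
      have hzlt : (y₁ - z)/r < z := by
        rw [div_lt_iff₀ hr0]
        linarith [mul_lt_mul_of_pos_left hz.1 (show (0:ℝ) < 1 + r by linarith), hy10]
      have hlt : ((y₁ - z)/r) ^ (p-1) < z ^ (p-1) :=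
        Real.rpow_lt_rpow (by positivity) hzlt hp1
      have heq2 : ((y₁ - z)/r) ^ (p-1) = R⁻¹ * (y₁ - z)^(p-1) := by
        rw [Real.div_rpow hzy hr0.le, ← hR_def, div_eq_mul_inv, mul_comm]
      rw [heq2] at hlt
      linarith [mul_pos hp0 (sub_pos.2 hlt)]
  -- conclude
  have hty_m : ty ∈ Icc y₀ y₁ := ⟨hty_l.le, hty_u.le⟩
  have hs₁m : s₁ ∈ Icc y₀ y₁ := ⟨hs₁l.le, hs₁u⟩
  have hs₂m : s₂ ∈ Icc y₀ y₁ := ⟨hs₂l.le, hs₂u⟩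
  have key1 : s₁ ≤ ty := by
    by_contra hcon
    push_neg at hcon
    have hcontr := hmono hty_m hs₁m hcon
    rw [← hLeq] at hcontr
    linarith [hLs₁y]
  have key2 : ty ≤ s₂ := by
    by_contra hcon
    push_neg at hcon
    have hcontr := hmono hs₂m hty_m hcon
    rw [← hLeq] at hcontr
    linarith [hLys₂]
  constructor
  · rw [hs₁_def, div_le_iff₀ hr0] at key1
    calc (1-β)*(y₁-y) ≤ (1-β)*(ty*r) := mul_le_mul_of_nonneg_left key1 h1β.le
      _ = β * ty := by rw [hr_def]; field_simp
  · rw [hs₂_def] at key2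
    have hry : r*y ≤ y₁ - ty := by linarith
    calc β*y = (1-β)*(r*y) := by rw [hr_def]; field_simp
      _ ≤ (1-β)*(y₁-ty) := mul_le_mul_of_nonneg_left hry h1β.le
end

section
/- Fix p > 1, q with 1/p + 1/q = 1, t > 0, and β ∈ [1/2, 1). Set y_0 = t(1−β)^{1/p}, y_1 = t(1−β)^{−1/q}, and x(y) = (β^{−1} − 1)^{1/q}(y_1 − y). For y ∈ (0, y_0), let ỹ ∈ (y_0, y_1) be the unique point with y^p + x(y)^p = ỹ^p + x(ỹ)^p, and let δ = min{0, 2 − p}. Then the derivative of the map y ↦ ỹ satisfies |dỹ/dy| ≥ (x(ỹ)·ỹ / (x(y)·y))^δ · (y_0 − y)/(ỹ − y_0), where dỹ/dy = ((βy)^{p/q} − ((1−β)(y_1−y))^{p/q}) / ((βỹ)^{p/q} − ((1−β)(y_1−ỹ))^{p/q}). -/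
open Real Set

-- tangent line bound for rpow
lemma rpow_tangent_le {Y X p : ℝ} (hY : 0 < Y) (hX : 0 ≤ X) (hp : 1 ≤ p) :
    Y ^ p + p * Y ^ (p - 1) * (X - Y) ≤ X ^ p := by
  have hYne : Y ≠ 0 := ne_of_gt hY
  have hs : -1 ≤ X / Y - 1 := by
    have : 0 ≤ X / Y := div_nonneg hX hY.le
    linarith
  have h := one_add_mul_self_le_rpow_one_add hs hp
  have h2 : (1 : ℝ) + (X / Y - 1) = X / Y := by ring
  rw [h2, Real.div_rpow hX hY.le] at h
  have hYp : 0 < Y ^ p := Real.rpow_pos_of_pos hY p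
  calc Y ^ p + p * Y ^ (p - 1) * (X - Y)
      = (1 + p * (X / Y - 1)) * Y ^ p := by
        rw [Real.rpow_sub hY, Real.rpow_one]; field_simp
    _ ≤ X ^ p / Y ^ p * Y ^ p := mul_le_mul_of_nonneg_right h hYp.le
    _ = X ^ p := by field_simp

-- concave slope lemmas (0 < e ≤ 1)
lemma slopeA {e W V V' : ℝ} (he0 : 0 ≤ e) (he1 : e ≤ 1)
    (hW : 0 ≤ W) (hWV : W < V) (hVV' : V ≤ V') :
    (V - W) * (V' ^ e - W ^ e) ≤ (V' - W) * (V ^ e - W ^ e) := by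
  rcases eq_or_lt_of_le hVV' with rfl | h
  · linarith
  have hne : V' - W ≠ 0 := by linarith
  have hcon := (Real.concaveOn_rpow he0 he1).2 (mem_Ici.mpr hW)
      (mem_Ici.mpr (by linarith : (0:ℝ) ≤ V'))
      (show (0:ℝ) ≤ (V' - V)/(V' - W) by
        apply div_nonneg <;> linarith)
      (show (0:ℝ) ≤ (V - W)/(V' - W) by
        apply div_nonneg <;> linarith)
      (by field_simp; ring)
  simp only [smul_eq_mul] at hcon
  have hval : (V' - V)/(V' - W) * W + (V - W)/(V' - W) * V' = V := by
    field_simp; ring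
  rw [hval] at hcon
  have h1 : (V' - W) * ((V' - V)/(V' - W) * W ^ e + (V - W)/(V' - W) * V' ^ e)
      = (V' - V) * W ^ e + (V - W) * V' ^ e := by field_simp <;> ring
  have h2 : (V' - V) * W ^ e + (V - W) * V' ^ e ≤ (V' - W) * V ^ e := by
    rw [← h1]
    exact mul_le_mul_of_nonneg_left hcon (by linarith)
  nlinarith [h2]

lemma slopeB {e W W' V : ℝ} (he0 : 0 ≤ e) (he1 : e ≤ 1)
    (hW : 0 ≤ W) (hWW' : W ≤ W') (hW'V : W' < V) :
    (V - W) * (V ^ e - W' ^ e) ≤ (V - W') * (V ^ e - W ^ e) := by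
  rcases eq_or_lt_of_le hWW' with rfl | h
  · linarith
  have hne : V - W ≠ 0 := by linarith
  have hcon := (Real.concaveOn_rpow he0 he1).2 (mem_Ici.mpr hW)
      (mem_Ici.mpr (by linarith : (0:ℝ) ≤ V))
      (show (0:ℝ) ≤ (V - W')/(V - W) by
        apply div_nonneg <;> linarith)
      (show (0:ℝ) ≤ (W' - W)/(V - W) by
        apply div_nonneg <;> linarith)
      (by field_simp; ring)
  simp only [smul_eq_mul] at hcon
  have hval : (V - W')/(V - W) * W + (W' - W)/(V - W) * V = W' := by
    field_simp; ring
  rw [hval] at hcon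
  have h1 : (V - W) * ((V - W')/(V - W) * W ^ e + (W' - W)/(V - W) * V ^ e)
      = (V - W') * W ^ e + (W' - W) * V ^ e := by field_simp <;> ring
  have h2 : (V - W') * W ^ e + (W' - W) * V ^ e ≤ (V - W) * W' ^ e := by
    rw [← h1]
    exact mul_le_mul_of_nonneg_left hcon (by linarith)
  nlinarith [h2]

-- convex slope lemmas (1 ≤ e)
lemma slopeA' {e W V V' : ℝ} (he1 : 1 ≤ e)
    (hW : 0 ≤ W) (hWV : W < V) (hVV' : V ≤ V') :
    (V' - W) * (V ^ e - W ^ e) ≤ (V - W) * (V' ^ e - W ^ e) := by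
  rcases eq_or_lt_of_le hVV' with rfl | h
  · linarith
  have hne : V' - W ≠ 0 := by linarith
  have hcon := (convexOn_rpow he1).2 (mem_Ici.mpr hW)
      (mem_Ici.mpr (by linarith : (0:ℝ) ≤ V'))
      (show (0:ℝ) ≤ (V' - V)/(V' - W) by
        apply div_nonneg <;> linarith)
      (show (0:ℝ) ≤ (V - W)/(V' - W) by
        apply div_nonneg <;> linarith)
      (by field_simp; ring)
  simp only [smul_eq_mul] at hcon
  have hval : (V' - V)/(V' - W) * W + (V - W)/(V' - W) * V' = V := by
    field_simp; ring
  rw [hval] at hcon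
  have h1 : (V' - W) * ((V' - V)/(V' - W) * W ^ e + (V - W)/(V' - W) * V' ^ e)
      = (V' - V) * W ^ e + (V - W) * V' ^ e := by field_simp <;> ring
  have h2 : (V' - W) * V ^ e ≤ (V' - V) * W ^ e + (V - W) * V' ^ e := by
    rw [← h1]
    exact mul_le_mul_of_nonneg_left hcon (by linarith)
  nlinarith [h2]

lemma slopeB' {e W W' V : ℝ} (he1 : 1 ≤ e)
    (hW : 0 ≤ W) (hWW' : W ≤ W') (hW'V : W' < V) :
    (V - W') * (V ^ e - W ^ e) ≤ (V - W) * (V ^ e - W' ^ e) := by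
  rcases eq_or_lt_of_le hWW' with rfl | h
  · linarith
  have hne : V - W ≠ 0 := by linarith
  have hcon := (convexOn_rpow he1).2 (mem_Ici.mpr hW)
      (mem_Ici.mpr (by linarith : (0:ℝ) ≤ V))
      (show (0:ℝ) ≤ (V - W')/(V - W) by
        apply div_nonneg <;> linarith)
      (show (0:ℝ) ≤ (W' - W)/(V - W) by
        apply div_nonneg <;> linarith)
      (by field_simp; ring)
  simp only [smul_eq_mul] at hcon
  have hval : (V - W')/(V - W) * W + (W' - W)/(V - W) * V = W' := by
    field_simp; ring
  rw [hval] at hcon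
  have h1 : (V - W) * ((V - W')/(V - W) * W ^ e + (W' - W)/(V - W) * V ^ e)
      = (V - W') * W ^ e + (W' - W) * V ^ e := by field_simp <;> ring
  have h2 : (V - W) * W' ^ e ≤ (V - W') * W ^ e + (W' - W) * V ^ e := by
    rw [← h1]
    exact mul_le_mul_of_nonneg_left hcon (by linarith)
  nlinarith [h2]
set_option maxHeartbeats 2000000 in
theorem claim2_derivative_bound
    (p q t β : ℝ) (hp : 1 < p) (hpq : 1 / p + 1 / q = 1) (ht : 0 < t)
    (hβ : β ∈ Set.Ico (1 / 2 : ℝ) 1)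
    (y₀ y₁ : ℝ) (hy₀ : y₀ = t * (1 - β) ^ (1 / p)) (hy₁ : y₁ = t * (1 - β) ^ (-(1 / q)))
    (x : ℝ → ℝ) (hx : ∀ z, x z = (β⁻¹ - 1) ^ (1 / q) * (y₁ - z))
    (δ : ℝ) (hδ : δ = min 0 (2 - p))
    (y ty : ℝ) (hy : y ∈ Set.Ioo (0 : ℝ) y₀) (hty : ty ∈ Set.Ioo y₀ y₁)
    (heq : y ^ p + x y ^ p = ty ^ p + x ty ^ p) :
    ((x ty * ty) / (x y * y)) ^ δ * ((y₀ - y) / (ty - y₀)) ≤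
      |((β * y) ^ (p / q) - ((1 - β) * (y₁ - y)) ^ (p / q)) /
        ((β * ty) ^ (p / q) - ((1 - β) * (y₁ - ty)) ^ (p / q))| := by
  obtain ⟨hy0, hyy0⟩ := hy
  obtain ⟨hty0, hty1⟩ := hty
  have hβ0 : (0:ℝ) < β := lt_of_lt_of_le (by norm_num) hβ.1
  have hβ1 : β < 1 := hβ.2
  have hβh : (1:ℝ)/2 ≤ β := hβ.1
  have h1β : 0 < 1 - β := by linarith
  have hp0 : 0 < p := by linarith
  have hpne : p ≠ 0 := ne_of_gt hp0
  have hq1 : 1/q = 1 - 1/p := by linarith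
  have hinvp : 1/p < 1 := by rw [div_lt_one hp0]; linarith
  have hq2 : 0 < 1/q := by rw [hq1]; linarith
  have hq0 : 0 < q := by
    rcases lt_trichotomy q 0 with h|h|h
    · exfalso; have : 1/q < 0 := div_neg_of_pos_of_neg one_pos h; linarith
    · exfalso; rw [h] at hq2; simp at hq2
    · exact h
  have hqne : q ≠ 0 := ne_of_gt hq0
  have hpq2 : p / q = p - 1 := by
    have h1 : p / q = p * (1/q) := by ring
    rw [h1, hq1]; field_simp
  have he0 : 0 < p - 1 := by linarith
  rw [hpq2]
  -- a
  obtain ⟨a, ha⟩ : ∃ u : ℝ, u = β⁻¹ - 1 := ⟨_, rfl⟩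
  have haeq : a = (1-β)/β := by rw [ha]; field_simp
  have ha0 : 0 < a := by rw [haeq]; positivity
  have ha1 : a ≤ 1 := by rw [haeq, div_le_one hβ0]; linarith
  have hane : a ≠ 0 := ne_of_gt ha0
  have hβa : β * a = 1 - β := by rw [haeq]; field_simp
  have hx' : ∀ z, x z = a ^ (1/q) * (y₁ - z) := by
    intro z; rw [hx z, ha]
  -- y₀ y₁
  have hy₁0 : 0 < y₁ := by rw [hy₁]; positivity
  have hkey : y₀ = (1 - β) * y₁ := by
    rw [hy₀, hy₁, show (1:ℝ)/p = 1 + -(1/q) by linarith,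
      Real.rpow_add h1β, Real.rpow_one]; ring
  have hy₀0 : 0 < y₀ := by rw [hkey]; positivity
  have hy01 : y₀ < y₁ := by
    rw [hkey]; nlinarith [mul_pos hβ0 hy₁0]
  have hay₁ : a * y₁ = (1 + a) * y₀ := by
    rw [hkey, haeq]; field_simp; ring
  have h1a : 0 < 1 + a := by linarith
  have hty0' : 0 < ty := by linarith
  -- pairs
  obtain ⟨X₂, hX₂⟩ : ∃ u : ℝ, u = a * (y₁ - y) := ⟨_, rfl⟩
  obtain ⟨Y₁, hY₁⟩ : ∃ u : ℝ, u = a * (y₁ - ty) := ⟨_, rfl⟩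
  have hY₁0 : 0 < Y₁ := by rw [hY₁]; exact mul_pos ha0 (by linarith)
  have hX₂0 : 0 < X₂ := by rw [hX₂]; exact mul_pos ha0 (by linarith)
  have hyX₂ : y < X₂ := by
    have h : X₂ - y = (1+a)*(y₀-y) := by rw [hX₂]; linear_combination hay₁
    linarith [h, mul_pos h1a (show (0:ℝ) < y₀ - y by linarith)]
  have hY₁ty : Y₁ < ty := by
    have h : ty - Y₁ = (1+a)*(ty-y₀) := by rw [hY₁]; linear_combination -hay₁
    linarith [h, mul_pos h1a (show (0:ℝ) < ty - y₀ by linarith)]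
  -- F values
  have hxz : ∀ z, z ≤ y₁ → x z ^ p = (a * (y₁ - z)) ^ p / a := by
    intro z hz
    rw [hx' z, Real.mul_rpow (Real.rpow_nonneg ha0.le _) (by linarith),
      Real.mul_rpow ha0.le (by linarith), ← Real.rpow_mul ha0.le,
      show 1/q * p = p - 1 by rw [show 1/q * p = p/q by ring, hpq2],
      Real.rpow_sub ha0, Real.rpow_one]
    ring
  have heqF : y ^ p + (a * (y₁ - y)) ^ p / a = ty ^ p + (a * (y₁ - ty)) ^ p / a := by
    rw [← hxz y (by linarith), ← hxz ty (by linarith)]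
    exact heq
  -- strict monotonicity of z ↦ z^p + (a(y₁-z))^p/a on (y₀, y₁]
  have hFmono : ∀ z₁ z₂, y₀ < z₁ → z₁ < z₂ → z₂ ≤ y₁ →
      z₁ ^ p + (a * (y₁ - z₁)) ^ p / a < z₂ ^ p + (a * (y₁ - z₂)) ^ p / a := by
    intro z₁ z₂ h1 h2 h3
    have hz₁0 : 0 < z₁ := lt_trans hy₀0 h1
    obtain ⟨W₁, hW₁⟩ : ∃ u : ℝ, u = a * (y₁ - z₁) := ⟨_, rfl⟩
    obtain ⟨W₂, hW₂⟩ : ∃ u : ℝ, u = a * (y₁ - z₂) := ⟨_, rfl⟩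
    rw [← hW₁, ← hW₂]
    have hW₁0 : 0 < W₁ := by rw [hW₁]; exact mul_pos ha0 (by linarith)
    have hW₂0 : 0 ≤ W₂ := by rw [hW₂]; exact mul_nonneg ha0.le (by linarith)
    have t1 : z₁ ^ p + p * z₁ ^ (p-1) * (z₂ - z₁) ≤ z₂ ^ p :=
      rpow_tangent_le hz₁0 (by linarith) hp.le
    have t2 : W₁ ^ p + p * W₁ ^ (p-1) * (W₂ - W₁) ≤ W₂ ^ p :=
      rpow_tangent_le hW₁0 hW₂0 hp.le
    have hWz : W₁ < z₁ := by
      have h : z₁ - W₁ = (1+a)*(z₁-y₀) := by rw [hW₁]; linear_combination -hay₁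
      linarith [h, mul_pos h1a (show (0:ℝ) < z₁ - y₀ by linarith)]
    have hpow : W₁ ^ (p-1) < z₁ ^ (p-1) :=
      Real.rpow_lt_rpow hW₁0.le hWz (by linarith)
    have t2' : p * W₁ ^ (p-1) * (W₂ - W₁) / a ≤ (W₂ ^ p - W₁ ^ p) / a :=
      (div_le_div_iff_of_pos_right ha0).mpr (by linarith)
    have hsimp : p * W₁ ^ (p-1) * (W₂ - W₁) / a = -(p * W₁ ^ (p-1) * (z₂ - z₁)) := by
      rw [show W₂ - W₁ = a * (z₁ - z₂) by rw [hW₁, hW₂]; ring]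
      field_simp
      ring
    rw [hsimp, sub_div] at t2'
    have key : 0 < p * (z₂ - z₁) * (z₁ ^ (p-1) - W₁ ^ (p-1)) := by
      apply mul_pos (mul_pos hp0 (by linarith)); linarith
    linarith [t1, t2', key]
  -- M1 : ty ≤ y₁ - y/a , hence y ≤ Y₁
  have hzz : a * (y₁ - y₀) = y₀ := by linear_combination hay₁
  have hw₁y₀ : y₀ < y₁ - y/a := by
    have h1 : y / a < y₁ - y₀ := by
      rw [div_lt_iff₀ ha0]; nlinarith [hzz]
    linarith
  have heqF2 : y ^ p + X₂ ^ p / a = ty ^ p + Y₁ ^ p / a := by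
    rw [hX₂, hY₁]; exact heqF
  have haw₁ : a * (y₁ - (y₁ - y/a)) = y := by field_simp; ring
  have hM1 : y ^ p + X₂ ^ p / a ≤ (y₁ - y/a) ^ p + y ^ p / a := by
    have hw₁0 : (0:ℝ) ≤ y₁ - y/a := by linarith [hw₁y₀, hy₀0]
    have hXc : X₂ = a * (y₁ - y/a) + (1-a) * y := by rw [hX₂]; field_simp; ring
    have hcomb : X₂ ^ p ≤ a * (y₁ - y/a) ^ p + (1-a) * y ^ p := by
      have hcv := (convexOn_rpow hp.le).2 (Set.mem_Ici.mpr hw₁0)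
        (Set.mem_Ici.mpr hy0.le) ha0.le (by linarith : (0:ℝ) ≤ 1-a) (by ring)
      simp only [smul_eq_mul] at hcv
      rw [← hXc] at hcv
      exact hcv
    have h2 : X₂ ^ p / a ≤ (y₁ - y/a) ^ p + y ^ p / a - y ^ p := by
      rw [div_le_iff₀ ha0, show ((y₁ - y/a) ^ p + y ^ p / a - y ^ p) * a
        = a * (y₁ - y/a) ^ p + (1-a) * y ^ p by field_simp; ring]
      exact hcomb
    linarith
  have hyY₁ : y ≤ Y₁ := by
    have htyw₁ : ty ≤ y₁ - y/a := by
      by_contra hcon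
      push_neg at hcon
      have hlt := hFmono (y₁ - y/a) ty hw₁y₀ hcon (le_of_lt hty1)
      rw [haw₁, ← hY₁] at hlt
      linarith [hM1, heqF2, hlt]
    have h1 : y/a ≤ y₁ - ty := by linarith
    have h2 := mul_le_mul_of_nonneg_left h1 ha0.le
    rw [mul_comm a (y/a), div_mul_cancel₀ _ hane] at h2
    rw [hY₁]; linarith
  -- M2 : X₂ ≤ ty
  have hX₂y₀ : y₀ < X₂ := by
    have h : X₂ - y₀ = a*(y₀ - y) := by rw [hX₂]; linear_combination hay₁
    linarith [h, mul_pos ha0 (show (0:ℝ) < y₀ - y by linarith)]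
  have hX₂y₁ : X₂ ≤ y₁ := by
    rw [hX₂]
    have h1 : a*(y₁-y) ≤ 1*(y₁-y) := mul_le_mul_of_nonneg_right ha1 (by linarith)
    linarith
  have hM2 : X₂ ^ p + (a * (y₁ - X₂)) ^ p / a ≤ y ^ p + X₂ ^ p / a := by
    have hYcc : a * (y₁ - X₂) = a * y + (1-a) * X₂ := by rw [hX₂]; ring
    have hcomb : (a * (y₁ - X₂)) ^ p ≤ a * y ^ p + (1-a) * X₂ ^ p := by
      have hcv := (convexOn_rpow hp.le).2 (Set.mem_Ici.mpr hy0.le)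
        (Set.mem_Ici.mpr hX₂0.le) ha0.le (by linarith : (0:ℝ) ≤ 1-a) (by ring)
      simp only [smul_eq_mul] at hcv
      rw [← hYcc] at hcv
      exact hcv
    have h2 : (a * (y₁ - X₂)) ^ p / a ≤ y ^ p + X₂ ^ p / a - X₂ ^ p := by
      rw [div_le_iff₀ ha0, show (y ^ p + X₂ ^ p / a - X₂ ^ p) * a
        = a * y ^ p + (1-a) * X₂ ^ p by field_simp; ring]
      exact hcomb
    linarith [h2]
  have hX₂ty : X₂ ≤ ty := by
    by_contra hcon
    push_neg at hcon
    have hlt := hFmono ty X₂ hty0 hcon hX₂y₁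
    rw [← hY₁] at hlt
    linarith [hM2, heqF2, hlt]
  -- rewrite RHS
  have hrw1 : (1 - β) * (y₁ - y) = β * X₂ := by rw [hX₂, ← hβa]; ring
  have hrw2 : (1 - β) * (y₁ - ty) = β * Y₁ := by rw [hY₁, ← hβa]; ring
  have hβe : 0 < β ^ (p-1) := Real.rpow_pos_of_pos hβ0 _
  have hXe : y ^ (p-1) < X₂ ^ (p-1) := Real.rpow_lt_rpow hy0.le hyX₂ he0
  have hYe : Y₁ ^ (p-1) < ty ^ (p-1) := Real.rpow_lt_rpow hY₁0.le hY₁ty he0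
  have hye0 : 0 < y ^ (p-1) := Real.rpow_pos_of_pos hy0 _
  have hX₂e0 : 0 < X₂ ^ (p-1) := Real.rpow_pos_of_pos hX₂0 _
  have htye0 : 0 < ty ^ (p-1) := Real.rpow_pos_of_pos hty0' _
  have hY₁e0 : 0 < Y₁ ^ (p-1) := Real.rpow_pos_of_pos hY₁0 _
  have hrhs : |((β * y) ^ (p-1) - ((1 - β) * (y₁ - y)) ^ (p-1)) /
      ((β * ty) ^ (p-1) - ((1 - β) * (y₁ - ty)) ^ (p-1))|
      = (X₂ ^ (p-1) - y ^ (p-1)) / (ty ^ (p-1) - Y₁ ^ (p-1)) := by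
    rw [hrw1, hrw2, Real.mul_rpow hβ0.le hy0.le, Real.mul_rpow hβ0.le hX₂0.le,
      Real.mul_rpow hβ0.le hty0'.le, Real.mul_rpow hβ0.le hY₁0.le,
      show β ^ (p-1) * y ^ (p-1) - β ^ (p-1) * X₂ ^ (p-1)
        = β ^ (p-1) * (y ^ (p-1) - X₂ ^ (p-1)) by ring,
      show β ^ (p-1) * ty ^ (p-1) - β ^ (p-1) * Y₁ ^ (p-1)
        = β ^ (p-1) * (ty ^ (p-1) - Y₁ ^ (p-1)) by ring,
      mul_div_mul_left _ _ (ne_of_gt hβe), abs_div,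
      abs_of_neg (by linarith : y ^ (p-1) - X₂ ^ (p-1) < 0),
      abs_of_pos (by linarith : (0:ℝ) < ty ^ (p-1) - Y₁ ^ (p-1)), neg_sub]
  rw [hrhs]
  -- rewrite LHS pieces
  have hKeq : (x ty * ty) / (x y * y) = (ty * Y₁) / (X₂ * y) := by
    rw [hx' ty, hx' y, hY₁, hX₂]
    have h1 : a ^ (1/q) ≠ 0 := ne_of_gt (Real.rpow_pos_of_pos ha0 _)
    have h2 : y₁ - y ≠ 0 := by linarith
    have h3 : y ≠ 0 := ne_of_gt hy0
    field_simp
  have hReq : (y₀ - y) / (ty - y₀) = (X₂ - y) / (ty - Y₁) := by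
    have e1 : X₂ - y = (1+a)*(y₀-y) := by rw [hX₂]; linear_combination hay₁
    have e2 : ty - Y₁ = (1+a)*(ty-y₀) := by rw [hY₁]; linear_combination -hay₁
    rw [e1, e2, mul_div_mul_left _ _ (ne_of_gt h1a)]
  rw [hKeq, hReq]
  have hd1 : 0 < ty - Y₁ := by linarith
  have hd2 : 0 < ty ^ (p-1) - Y₁ ^ (p-1) := by linarith
  -- case split
  rcases le_total p 2 with hp2 | hp2
  · -- p - 1 ≤ 1, δ = 0
    have he1 : p - 1 ≤ 1 := by linarith
    have hδ0 : δ = 0 := by rw [hδ, min_eq_left (by linarith)]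
    rw [hδ0, Real.rpow_zero, one_mul, div_le_div_iff₀ hd1 hd2]
    have s1 : (X₂ - y) * (ty ^ (p-1) - y ^ (p-1)) ≤ (ty - y) * (X₂ ^ (p-1) - y ^ (p-1)) :=
      slopeA he0.le he1 hy0.le hyX₂ hX₂ty
    have s2 : (ty - y) * (ty ^ (p-1) - Y₁ ^ (p-1)) ≤ (ty - Y₁) * (ty ^ (p-1) - y ^ (p-1)) :=
      slopeB he0.le he1 hy0.le hyY₁ hY₁ty
    have c1 := mul_le_mul_of_nonneg_left s2 (by linarith : (0:ℝ) ≤ X₂ - y)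
    have c2 := mul_le_mul_of_nonneg_left s1 (by linarith : (0:ℝ) ≤ ty - Y₁)
    have hchain : (X₂ - y) * (ty ^ (p-1) - Y₁ ^ (p-1)) * (ty - y)
        ≤ (X₂ ^ (p-1) - y ^ (p-1)) * (ty - Y₁) * (ty - y) := by linarith [c1, c2]
    exact le_of_mul_le_mul_right hchain (by linarith : (0:ℝ) < ty - y)
  · -- 1 ≤ p - 1, δ = 2 - p
    have he1 : 1 ≤ p - 1 := by linarith
    have hδe : δ = 1 - (p-1) := by rw [hδ, min_eq_right (by linarith)]; ring
    have hv : (0:ℝ) < ty⁻¹ := by positivity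
    have hi1 : ty⁻¹ ≤ X₂⁻¹ := inv_anti₀ hX₂0 hX₂ty
    have hi2 : X₂⁻¹ < y⁻¹ := inv_strictAnti₀ hy0 hyX₂
    have hi3 : ty⁻¹ < Y₁⁻¹ := inv_strictAnti₀ hY₁0 hY₁ty
    have hi4 : Y₁⁻¹ ≤ y⁻¹ := inv_anti₀ hy0 hyY₁
    have s1' : (y⁻¹ - ty⁻¹) * (Y₁⁻¹ ^ (p-1) - ty⁻¹ ^ (p-1))
        ≤ (Y₁⁻¹ - ty⁻¹) * (y⁻¹ ^ (p-1) - ty⁻¹ ^ (p-1)) :=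
      slopeA' he1 hv.le hi3 hi4
    have s2' : (y⁻¹ - X₂⁻¹) * (y⁻¹ ^ (p-1) - ty⁻¹ ^ (p-1))
        ≤ (y⁻¹ - ty⁻¹) * (y⁻¹ ^ (p-1) - X₂⁻¹ ^ (p-1)) :=
      slopeB' he1 hv.le hi1 hi2
    have c1 := mul_le_mul_of_nonneg_left s1' (by linarith : (0:ℝ) ≤ y⁻¹ - X₂⁻¹)
    have c2 := mul_le_mul_of_nonneg_left s2' (by linarith : (0:ℝ) ≤ Y₁⁻¹ - ty⁻¹)
    have hvv : (0:ℝ) < y⁻¹ - ty⁻¹ := by linarith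
    have hPSI : (y⁻¹ - X₂⁻¹) * (Y₁⁻¹ ^ (p-1) - ty⁻¹ ^ (p-1)) * (y⁻¹ - ty⁻¹)
        ≤ (y⁻¹ ^ (p-1) - X₂⁻¹ ^ (p-1)) * (Y₁⁻¹ - ty⁻¹) * (y⁻¹ - ty⁻¹) := by
      linarith [c1, c2]
    have hPSI' := le_of_mul_le_mul_right hPSI hvv
    have hyne : y ≠ 0 := ne_of_gt hy0
    have hX₂ne : X₂ ≠ 0 := ne_of_gt hX₂0
    have htyne : ty ≠ 0 := ne_of_gt hty0'
    have hY₁ne : Y₁ ≠ 0 := ne_of_gt hY₁0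
    have q1 : y⁻¹ - X₂⁻¹ = (X₂ - y)/(X₂ * y) := by
      field_simp
    have q2 : Y₁⁻¹ ^ (p-1) - ty⁻¹ ^ (p-1)
        = (ty ^ (p-1) - Y₁ ^ (p-1))/(ty ^ (p-1) * Y₁ ^ (p-1)) := by
      rw [Real.inv_rpow hY₁0.le, Real.inv_rpow hty0'.le]
      field_simp
    have q3 : y⁻¹ ^ (p-1) - X₂⁻¹ ^ (p-1)
        = (X₂ ^ (p-1) - y ^ (p-1))/(X₂ ^ (p-1) * y ^ (p-1)) := by
      rw [Real.inv_rpow hy0.le, Real.inv_rpow hX₂0.le]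
      field_simp
    have q4 : Y₁⁻¹ - ty⁻¹ = (ty - Y₁)/(ty * Y₁) := by
      field_simp
    rw [q1, q2, q3, q4, div_mul_div_comm, div_mul_div_comm,
      div_le_div_iff₀ (by positivity) (by positivity)] at hPSI'
    have hKpos : (0:ℝ) < (ty * Y₁) / (X₂ * y) :=
      div_pos (mul_pos hty0' hY₁0) (mul_pos hX₂0 hy0)
    have hKe : ((ty * Y₁) / (X₂ * y)) ^ δ
        = (ty * Y₁) * (X₂ ^ (p-1) * y ^ (p-1)) / ((X₂ * y) * (ty ^ (p-1) * Y₁ ^ (p-1))) := by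
      rw [hδe, Real.rpow_sub hKpos, Real.rpow_one,
        Real.div_rpow (mul_pos hty0' hY₁0).le (mul_pos hX₂0 hy0).le,
        Real.mul_rpow hty0'.le hY₁0.le, Real.mul_rpow hX₂0.le hy0.le]
      rw [div_div_div_eq]
    rw [hKe, div_mul_div_comm, div_le_div_iff₀ (by positivity) hd2]
    linarith [hPSI']
end
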